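/- arXiv:1105.1894 — 12 statements merged into one kernel-verified Lean document; each statement's English description precedes it below -/
import Mathlib

section
/- Let F be a finite field and E an extension field of F, let n be a positive integer, and let α ∈ E have multiplicative order exactly n. Let h, f ∈ F[X] be coprime with v := deg h < u := deg f and f(0) ≠ 0, and let a_j ∈ F be the j-th coefficient of the formal power series h/f ∈ F[[X]]. Let p be a positive integer with f ∣ X^p − 1 and gcd(p, n) = 1, let b be an integer and μ ≥ 2. If c ∈ F[X] is nonzero with deg c < n and a_j · c(α^{b+j}) = 0 in E for every j = 0, 1, …, μ−2, then the Hamming weight of c satisfies wt(c) ≥ ⌈(μ−1−v)/u⌉ + 1; equivalently, (wt(c) − 1)·u + v ≥ μ − 1. -/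
open Polynomial

lemma coeff_comp_C_mul_X {R : Type*} [CommSemiring R] (p : R[X]) (r : R) (k : ℕ) :
    (p.comp (C r * X)).coeff k = p.coeff k * r ^ k := by
  rw [comp_eq_sum_left, Polynomial.sum, finset_sum_coeff]
  rw [Finset.sum_eq_single k]
  · rw [mul_pow, ← C_pow, ← mul_assoc, ← C_mul, coeff_C_mul_X_pow]
    simp [mul_comm]
  · intro e he hek
    rw [mul_pow, ← C_pow, ← mul_assoc, ← C_mul, coeff_C_mul_X_pow]
    simp [Ne.symm hek]
  · intro hk
    simp [Polynomial.notMem_support_iff.mp hk]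

lemma coe_map_ps {F E : Type*} [CommSemiring F] [CommSemiring E] (φ : F →+* E) (q : F[X]) :
    (PowerSeries.map φ (q : PowerSeries F)) = ((q.map φ : E[X]) : PowerSeries E) := by
  ext m
  simp [Polynomial.coeff_coe]


lemma coe_prod_ps {R ι : Type*} [CommSemiring R] (s : Finset ι) (f : ι → R[X]) :
    ((∏ i ∈ s, f i : R[X]) : PowerSeries R) = ∏ i ∈ s, ((f i : R[X]) : PowerSeries R) := by
  induction s using Finset.cons_induction with
  | empty => simp
  | cons a s ha ih => rw [Finset.prod_cons, Finset.prod_cons, Polynomial.coe_mul, ih]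

set_option maxHeartbeats 1000000

lemma coe_sum_ps {R ι : Type*} [CommSemiring R] (s : Finset ι) (f : ι → R[X]) :
    ((∑ i ∈ s, f i : R[X]) : PowerSeries R) = ∑ i ∈ s, ((f i : R[X]) : PowerSeries R) := by
  induction s using Finset.cons_induction with
  | empty => simp
  | cons a s ha ih => rw [Finset.sum_cons, Finset.sum_cons, Polynomial.coe_add, ih]

/-- The main theorem (Theorem 2, Minimum Distance): a new lower bound on the
weight of codewords of a cyclic code via rational functions. -/
theorem minimum_distance_bound
    (F E : Type*) [Field F] [Fintype F] [Field E] [Algebra F E]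
    (n : ℕ) (hn : 0 < n) (α : E) (hα : orderOf α = n)
    (h f : Polynomial F) (hcop : IsCoprime h f)
    (hdeg : h.natDegree < f.natDegree) (hf0 : f.coeff 0 ≠ 0)
    (a : ℕ → F)
    (ha : (PowerSeries.mk a) * (f : PowerSeries F) = (h : PowerSeries F))
    (p : ℕ) (hp : 0 < p) (hfp : f ∣ Polynomial.X ^ p - 1)
    (hpn : Nat.gcd p n = 1)
    (b : ℤ) (μ : ℕ) (hμ : 2 ≤ μ)
    (c : Polynomial F) (hc : c ≠ 0) (hcdeg : c.natDegree < n)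
    (hzero : ∀ j : ℕ, j ≤ μ - 2 →
      algebraMap F E (a j) * (c.map (algebraMap F E)).eval (α ^ (b + (j : ℤ))) = 0) :
    μ - 1 ≤ (c.support.card - 1) * f.natDegree + h.natDegree := by
  classical
  set φ := algebraMap F E with hφdef
  have hφ : Function.Injective φ := (algebraMap F E).injective
  have hα0 : α ≠ 0 := by
    intro h0
    have h1 : α ^ n = 1 := by rw [← hα]; exact pow_orderOf_eq_one α
    rw [h0, zero_pow hn.ne'] at h1
    exact zero_ne_one h1
  set g := c.map φ with hgdef
  set hE := h.map φ with hhEdef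
  set fE := f.map φ with hfEdef
  set S := c.support with hSdef
  set β : ℕ → E := fun i => α ^ i with hβdef
  have hβ0 : ∀ i, β i ≠ 0 := fun i => pow_ne_zero _ hα0
  set lam : ℕ → E := fun i => φ (c.coeff i) * α ^ (b * (i : ℤ)) with hlamdef
  set P : ℕ → E[X] := fun i => hE.comp (C (β i) * X) with hPdef
  set Q : ℕ → E[X] := fun i => fE.comp (C (β i) * X) with hQdef
  -- h is nonzero
  have hh0 : h ≠ 0 := by
    intro h0
    rw [h0] at hcop
    have := Polynomial.natDegree_eq_zero_of_isUnit (isCoprime_zero_left.mp hcop)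
    omega
  -- mapped power series identity
  have haE : (PowerSeries.mk fun j => φ (a j)) * (fE : PowerSeries E)
      = (hE : PowerSeries E) := by
    have h1 := congrArg (PowerSeries.map φ) ha
    rw [map_mul, coe_map_ps, coe_map_ps] at h1
    have h2 : PowerSeries.map φ (PowerSeries.mk a) = PowerSeries.mk fun j => φ (a j) := by
      ext m; simp
    rw [h2] at h1
    exact h1
  -- key rescaling identity
  have key : ∀ i, (PowerSeries.mk fun j => φ (a j) * β i ^ j) * (Q i : PowerSeries E)
      = (P i : PowerSeries E) := by
    intro i
    ext m
    have h1 : (PowerSeries.coeff m) ((PowerSeries.mk fun j => φ (a j) * β i ^ j) * (Q i : PowerSeries E))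
        = (∑ x ∈ Finset.HasAntidiagonal.antidiagonal m, φ (a x.1) * fE.coeff x.2) * β i ^ m := by
      rw [PowerSeries.coeff_mul, Finset.sum_mul]
      refine Finset.sum_congr rfl fun x hx => ?_
      have hxm : x.1 + x.2 = m := Finset.HasAntidiagonal.mem_antidiagonal.mp hx
      rw [PowerSeries.coeff_mk, Polynomial.coeff_coe, hQdef]
      simp only
      rw [coeff_comp_C_mul_X, ← hxm, pow_add]
      ring
    have h2 : (∑ x ∈ Finset.HasAntidiagonal.antidiagonal m, φ (a x.1) * fE.coeff x.2) = hE.coeff m := by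
      have h3 := congrArg (PowerSeries.coeff m) haE
      rw [PowerSeries.coeff_mul, Polynomial.coeff_coe] at h3
      simp only [PowerSeries.coeff_mk, Polynomial.coeff_coe] at h3
      exact h3
    rw [h1, h2, Polynomial.coeff_coe, hPdef]
    simp only
    rw [coeff_comp_C_mul_X]
  -- evaluation decomposition
  have heval : ∀ j : ℕ, g.eval (α ^ (b + (j : ℤ))) = ∑ i ∈ S, lam i * β i ^ j := by
    intro j
    rw [Polynomial.eval_eq_sum, Polynomial.sum_def, hgdef,
      Polynomial.support_map_of_injective c hφ]
    refine Finset.sum_congr rfl fun i hi => ?_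
    rw [Polynomial.coeff_map]
    have hz : (α ^ (b + (j : ℤ))) ^ i = α ^ (b * (i : ℤ)) * (α ^ i) ^ j := by
      rw [← zpow_natCast (α ^ (b + (j : ℤ))) i, ← zpow_mul, add_mul, zpow_add₀ hα0]
      congr 1
      rw [← zpow_natCast (α ^ i) j, ← zpow_natCast α i, ← zpow_mul, mul_comm]
    rw [hz, hlamdef, hβdef]
    ring
  -- the series T
  set T : PowerSeries E := PowerSeries.mk fun j => φ (a j) * g.eval (α ^ (b + (j : ℤ)))
    with hTdef
  have hT : T = ∑ i ∈ S, PowerSeries.C (lam i) *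
      PowerSeries.mk fun j => φ (a j) * β i ^ j := by
    ext m
    rw [hTdef, PowerSeries.coeff_mk, heval, Finset.mul_sum, map_sum]
    refine Finset.sum_congr rfl fun i _ => ?_
    rw [PowerSeries.coeff_C_mul, PowerSeries.coeff_mk]
    ring
  -- N and D
  set D : E[X] := ∏ i ∈ S, Q i with hDdef
  set N : E[X] := ∑ i ∈ S, C (lam i) * (P i * ∏ l ∈ S.erase i, Q l) with hNdef
  have hTD : T * (D : PowerSeries E) = (N : PowerSeries E) := by
    rw [hT, Finset.sum_mul, hNdef, coe_sum_ps]
    refine Finset.sum_congr rfl fun i hi => ?_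
    rw [hDdef]
    simp only [Polynomial.coe_mul, Polynomial.coe_C, coe_prod_ps]
    rw [← Finset.mul_prod_erase S (fun l => ((Q l : E[X]) : PowerSeries E)) hi, ← key i]
    ring
  -- low coefficients of N vanish
  have hNcoeff : ∀ j, j < μ - 1 → N.coeff j = 0 := by
    intro j hj
    have h1 := congrArg (PowerSeries.coeff j) hTD
    rw [PowerSeries.coeff_mul, Polynomial.coeff_coe] at h1
    rw [← h1]
    refine Finset.sum_eq_zero fun x hx => ?_
    have hxm : x.1 + x.2 = j := Finset.HasAntidiagonal.mem_antidiagonal.mp hx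
    have hx1 : x.1 ≤ μ - 2 := by omega
    rw [hTdef, PowerSeries.coeff_mk, hzero x.1 hx1, zero_mul]
  -- the βs are injective on S, in the p-th power sense
  have hβinj : ∀ i ∈ S, ∀ l ∈ S, i ≠ l → β i ^ p ≠ β l ^ p := by
    intro i hi l hl hil heq
    have hin : i < n := lt_of_le_of_lt (Polynomial.le_natDegree_of_mem_supp i hi) hcdeg
    have hln : l < n := lt_of_le_of_lt (Polynomial.le_natDegree_of_mem_supp l hl) hcdeg
    have heq2 : α ^ (i * p) = α ^ (l * p) := by
      simpa [hβdef, pow_mul] using heq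
    set uα : Eˣ := Units.mk0 α hα0 with huα
    have heq3 : uα ^ (i * p) = uα ^ (l * p) := by
      ext
      simpa [huα] using heq2
    have hmod : i * p ≡ l * p [MOD n] := by
      have horder : orderOf uα = n := by
        rw [← hα, ← orderOf_units, huα]
        rfl
      rw [← horder]
      exact pow_eq_pow_iff_modEq.mp heq3
    have : i ≡ l [MOD n] :=
      Nat.ModEq.cancel_right_of_coprime (by rwa [Nat.gcd_comm]) hmod
    have := this.eq_of_lt_of_lt hin hln
    exact hil this
  -- coprimality of the Q's
  have hQdvd : ∀ i, Q i ∣ C (β i ^ p) * X ^ p - 1 := by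
    intro i
    have h1 : fE ∣ X ^ p - 1 := by
      have := Polynomial.map_dvd φ hfp
      rwa [Polynomial.map_sub, Polynomial.map_pow, Polynomial.map_X, Polynomial.map_one] at this
    obtain ⟨k, hk⟩ := h1
    refine ⟨k.comp (C (β i) * X), ?_⟩
    rw [hQdef]
    simp only
    rw [← Polynomial.mul_comp, ← hk, Polynomial.sub_comp, Polynomial.pow_comp,
      Polynomial.X_comp, Polynomial.one_comp, mul_pow, ← C_pow]
  have hcopQ : ∀ i ∈ S, ∀ l ∈ S, i ≠ l → IsCoprime (Q i) (Q l) := by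
    intro i hi l hl hil
    have hne : β i ^ p ≠ β l ^ p := hβinj i hi l hl hil
    set γ := β i ^ p
    set δ := β l ^ p
    have hbig : IsCoprime (C γ * X ^ p - 1) (C δ * X ^ p - 1) := by
      refine ⟨C ((γ - δ)⁻¹) * C δ, -(C ((γ - δ)⁻¹) * C γ), ?_⟩
      have hkey : C δ * (C γ * X ^ p - 1) - C γ * (C δ * X ^ p - 1) = C γ - C δ := by ring
      have : C ((γ - δ)⁻¹) * C δ * (C γ * X ^ p - 1) +
          -(C ((γ - δ)⁻¹) * C γ) * (C δ * X ^ p - 1)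
          = C ((γ - δ)⁻¹) * (C δ * (C γ * X ^ p - 1) - C γ * (C δ * X ^ p - 1)) := by ring
      rw [this, hkey, ← C_sub, ← C_mul, inv_mul_cancel₀ (sub_ne_zero.mpr hne), C_1]
    exact IsCoprime.of_isCoprime_of_dvd_left
      (IsCoprime.of_isCoprime_of_dvd_right hbig (hQdvd l)) (hQdvd i)
  -- degrees of P and Q
  have hfE0 : fE ≠ 0 := Polynomial.map_ne_zero (fun h0 => hf0 (by simp [h0]))
  have hhE0 : hE ≠ 0 := Polynomial.map_ne_zero hh0
  have hdegQ : ∀ i, (Q i).natDegree = f.natDegree := by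
    intro i
    rw [hQdef]
    simp only
    rw [Polynomial.natDegree_comp, Polynomial.natDegree_C_mul_X _ (hβ0 i), mul_one,
      hfEdef, Polynomial.natDegree_map]
  have hdegP : ∀ i, (P i).natDegree = h.natDegree := by
    intro i
    rw [hPdef]
    simp only
    rw [Polynomial.natDegree_comp, Polynomial.natDegree_C_mul_X _ (hβ0 i), mul_one,
      hhEdef, Polynomial.natDegree_map]
  have hP0 : ∀ i, P i ≠ 0 := by
    intro i h0
    have h1 : (P i).coeff hE.natDegree = hE.coeff hE.natDegree * β i ^ hE.natDegree := by
      rw [hPdef]; exact coeff_comp_C_mul_X hE (β i) hE.natDegree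
    rw [h0, Polynomial.coeff_zero] at h1
    exact (mul_ne_zero (Polynomial.leadingCoeff_ne_zero.mpr hhE0)
      (pow_ne_zero _ (hβ0 i))) h1.symm
  have hlam0 : ∀ i ∈ S, lam i ≠ 0 := by
    intro i hi
    rw [hlamdef]
    exact mul_ne_zero (fun h0 => (Polynomial.mem_support_iff.mp hi)
      (hφ (by rwa [map_zero]))) (zpow_ne_zero _ hα0)
  -- N is nonzero
  obtain ⟨i0, hi0⟩ := Polynomial.nonempty_support_iff.mpr hc
  have hN0 : N ≠ 0 := by
    intro h0
    have hterm : C (lam i0) * (P i0 * ∏ l ∈ S.erase i0, Q l)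
        = -∑ i ∈ S.erase i0, C (lam i) * (P i * ∏ l ∈ S.erase i, Q l) := by
      have := Finset.add_sum_erase S
        (fun i => C (lam i) * (P i * ∏ l ∈ S.erase i, Q l)) hi0
      rw [← hNdef] at this
      rw [h0] at this
      linear_combination this
    have hdvd : Q i0 ∣ C (lam i0) * (P i0 * ∏ l ∈ S.erase i0, Q l) := by
      rw [hterm]
      refine dvd_neg.mpr (Finset.dvd_sum fun i hi => ?_)
      have hi0mem : i0 ∈ S.erase i := Finset.mem_erase.mpr
        ⟨fun heq => (Finset.mem_erase.mp hi).1 heq.symm, hi0⟩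
      exact dvd_mul_of_dvd_right (dvd_mul_of_dvd_right (Finset.dvd_prod_of_mem Q hi0mem) _) _
    have hcp : IsCoprime (Q i0) (∏ l ∈ S.erase i0, Q l) :=
      IsCoprime.prod_right fun l hl =>
        hcopQ i0 hi0 l (Finset.mem_of_mem_erase hl)
          (fun heq => (Finset.mem_erase.mp hl).1 heq.symm)
    have hdvd2 : Q i0 ∣ C (lam i0) * P i0 := by
      refine IsCoprime.dvd_of_dvd_mul_right hcp ?_
      rwa [← mul_assoc] at hdvd
    have hne : C (lam i0) * P i0 ≠ 0 :=
      mul_ne_zero (fun h1 => (hlam0 i0 hi0) (by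
        have := Polynomial.C_eq_zero.mp h1; exact this)) (hP0 i0)
    have := Polynomial.natDegree_le_of_dvd hdvd2 hne
    rw [hdegQ i0] at this
    have h2 : (C (lam i0) * P i0).natDegree ≤ h.natDegree := by
      refine le_trans Polynomial.natDegree_mul_le ?_
      rw [Polynomial.natDegree_C, hdegP i0, zero_add]
    omega
  -- degree bound on N
  have hdegN : N.natDegree ≤ (S.card - 1) * f.natDegree + h.natDegree := by
    rw [hNdef]
    refine Polynomial.natDegree_sum_le_of_forall_le S _ fun i hi => ?_
    refine le_trans Polynomial.natDegree_mul_le ?_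
    rw [Polynomial.natDegree_C, zero_add]
    refine le_trans Polynomial.natDegree_mul_le ?_
    have hprodle : (∏ l ∈ S.erase i, Q l).natDegree ≤ (S.card - 1) * f.natDegree := by
      refine le_trans (Polynomial.natDegree_prod_le _ _) ?_
      rw [Finset.sum_congr rfl fun l _ => hdegQ l, Finset.sum_const, smul_eq_mul,
        Finset.card_erase_of_mem hi]
    rw [hdegP i]
    omega
  -- lower bound on degree of N
  have hlow : μ - 1 ≤ N.natDegree := by
    by_contra hcon
    push_neg at hcon
    exact (Polynomial.leadingCoeff_ne_zero.mpr hN0) (hNcoeff N.natDegree hcon)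
  omega
end

section
/- Let F be a finite field and E an extension field of F, let n be a positive integer, α ∈ E of multiplicative order exactly n, and b an integer. Let h, f ∈ F[X] with f(0) ≠ 0, and let a_j ∈ F be the j-th coefficient of the formal power series h/f ∈ F[[X]]. Then for every c ∈ F[X] with deg c < n and support W, the following identity holds in the power series ring E[[X]]: (∏_{i∈W} f(α^i X)) · (Σ_{j=0}^{∞} a_j c(α^{b+j}) X^j) = Σ_{i∈W} c_i · α^{i b} · h(α^i X) · ∏_{j∈W, j≠i} f(α^j X), where c_i denotes the i-th coefficient of c and f(α^i X), h(α^i X) denote the polynomials f and h (with coefficients mapped into E) with X replaced by α^i·X. -/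
open Polynomial

/-- The polynomial `f(γ·X)`: map the coefficients along `φ` and substitute `γ·X` for `X`. -/
noncomputable def polySubst {F E : Type*} [CommRing F] [CommRing E]
    (φ : F →+* E) (f : Polynomial F) (γ : E) : Polynomial E :=
  (f.map φ).comp (Polynomial.C γ * Polynomial.X)

lemma polySubst_coe {F E : Type*} [CommRing F] [CommRing E]
    (φ : F →+* E) (f : Polynomial F) (γ : E) :
    ((polySubst φ f γ : Polynomial E) : PowerSeries E) =
      PowerSeries.rescale γ ((f.map φ : Polynomial E) : PowerSeries E) := by
  have key : (PowerSeries.rescale γ).comp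
      ((Polynomial.coeToPowerSeries.ringHom : Polynomial E →+* PowerSeries E)) =
      (Polynomial.coeToPowerSeries.ringHom).comp (Polynomial.compRingHom (Polynomial.C γ * Polynomial.X)) := by
    apply Polynomial.ringHom_ext
    · intro r
      simp only [RingHom.comp_apply, Polynomial.compRingHom, Polynomial.C_comp,
        Polynomial.coeToPowerSeries.ringHom_apply, Polynomial.coe_C]
      ext n
      simp only [PowerSeries.coeff_rescale, PowerSeries.coeff_C]
      split <;> simp_all [PowerSeries.coeff_C]
    · simp only [RingHom.comp_apply, Polynomial.compRingHom, Polynomial.X_comp,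
        Polynomial.coeToPowerSeries.ringHom_apply, Polynomial.coe_X,
        PowerSeries.rescale_X, Polynomial.coe_mul, Polynomial.coe_C,
        Polynomial.coe_eval₂RingHom, Polynomial.eval₂_X]
  have := congrArg (fun ψ => ψ (f.map φ)) key
  simpa [polySubst, Polynomial.compRingHom, Polynomial.comp] using this.symm

lemma coe_map_PS {F E : Type*} [CommRing F] [CommRing E] (φ : F →+* E) (p : Polynomial F) :
    PowerSeries.map φ (p : PowerSeries F) = ((p.map φ : Polynomial E) : PowerSeries E) := by
  ext n
  simp [Polynomial.coeff_coe]

/-- Equations (13)–(15): the syndrome-type power series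
`Σ_j a_j c(α^{b+j}) X^j` equals a rational function with denominator
`∏_{i ∈ W} f(α^i X)`, written as an identity in `E⟦X⟧`. -/
theorem rational_function_identity
    (F E : Type*) [Field F] [Fintype F] [Field E] [Algebra F E]
    (n : ℕ) (hn : 0 < n) (α : E) (hα : orderOf α = n) (b : ℤ)
    (h f : Polynomial F) (hf0 : f.coeff 0 ≠ 0)
    (a : ℕ → F)
    (ha : (PowerSeries.mk a) * (f : PowerSeries F) = (h : PowerSeries F))
    (c : Polynomial F) (hcdeg : c.natDegree < n) :
    ((∏ i ∈ c.support, polySubst (algebraMap F E) f (α ^ (i : ℤ)) : Polynomial E) :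
        PowerSeries E) *
      PowerSeries.mk
        (fun j => algebraMap F E (a j) *
          (c.map (algebraMap F E)).eval (α ^ (b + (j : ℤ)))) =
    ((∑ i ∈ c.support,
        Polynomial.C (algebraMap F E (c.coeff i) * α ^ ((i : ℤ) * b)) *
          polySubst (algebraMap F E) h (α ^ (i : ℤ)) *
          ∏ j ∈ c.support.erase i, polySubst (algebraMap F E) f (α ^ (j : ℤ)) :
        Polynomial E) : PowerSeries E) := by
  set φ := algebraMap F E with hφ
  have hα0 : α ≠ 0 := by
    intro h0
    have h1 := pow_orderOf_eq_one α
    rw [hα, h0, zero_pow hn.ne'] at h1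
    exact zero_ne_one h1
  -- mapped identity in E⟦X⟧
  have hamap : (PowerSeries.mk fun j => φ (a j)) *
      ((f.map φ : Polynomial E) : PowerSeries E) = ((h.map φ : Polynomial E) : PowerSeries E) := by
    have := congrArg (PowerSeries.map φ) ha
    rw [map_mul, coe_map_PS, coe_map_PS] at this
    have e : PowerSeries.map φ (PowerSeries.mk a) = PowerSeries.mk fun j => φ (a j) := by
      ext m; simp
    rwa [e] at this
  have key : ∀ γ : E, PowerSeries.rescale γ (PowerSeries.mk fun j => φ (a j)) *
      ((polySubst φ f γ : Polynomial E) : PowerSeries E) =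
      ((polySubst φ h γ : Polynomial E) : PowerSeries E) := by
    intro γ
    rw [polySubst_coe, polySubst_coe, ← map_mul, hamap]
  -- exponent identity
  have hexp : ∀ (i j : ℕ), (α ^ (b + (j : ℤ))) ^ i = α ^ ((i : ℤ) * b) * (α ^ (i : ℤ)) ^ j := by
    intro i j
    rw [← zpow_natCast (α ^ (b + (j : ℤ))) i, ← zpow_natCast (α ^ (i : ℤ)) j,
      ← zpow_mul, ← zpow_mul, ← zpow_add₀ hα0]
    ring_nf
  -- rewrite the syndrome series as a sum
  have hmk : PowerSeries.mk
      (fun j => φ (a j) * (c.map φ).eval (α ^ (b + (j : ℤ)))) =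
      ∑ i ∈ c.support, PowerSeries.C (φ (c.coeff i) * α ^ ((i : ℤ) * b)) *
        PowerSeries.rescale (α ^ (i : ℤ)) (PowerSeries.mk fun j => φ (a j)) := by
    ext j
    rw [PowerSeries.coeff_mk, map_sum]
    have heval : (c.map φ).eval (α ^ (b + (j : ℤ))) =
        ∑ i ∈ c.support, φ (c.coeff i) * (α ^ (b + (j : ℤ))) ^ i := by
      rw [Polynomial.eval_map, Polynomial.eval₂_eq_sum, Polynomial.sum_def]
    rw [heval, Finset.mul_sum]
    refine Finset.sum_congr rfl fun i _ => ?_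
    rw [PowerSeries.coeff_C_mul, PowerSeries.coeff_rescale, PowerSeries.coeff_mk, hexp i j]
    ring
  rw [hmk, Finset.mul_sum]
  conv_rhs => rw [← Polynomial.coeToPowerSeries.ringHom_apply, map_sum]
  simp only [Polynomial.coeToPowerSeries.ringHom_apply]
  refine Finset.sum_congr rfl fun i hi => ?_
  have hprod : ((∏ k ∈ c.support, polySubst φ f (α ^ (k : ℤ)) : Polynomial E) : PowerSeries E)
      = ((polySubst φ f (α ^ (i : ℤ)) : Polynomial E) : PowerSeries E) *
        ((∏ k ∈ c.support.erase i, polySubst φ f (α ^ (k : ℤ)) : Polynomial E) : PowerSeries E) := by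
    rw [← Finset.mul_prod_erase _ _ hi]
    push_cast
    rfl
  have hterm : ((Polynomial.C (φ (c.coeff i) * α ^ ((i : ℤ) * b)) *
        polySubst φ h (α ^ (i : ℤ)) *
        ∏ j ∈ c.support.erase i, polySubst φ f (α ^ (j : ℤ)) : Polynomial E) : PowerSeries E)
      = PowerSeries.C (φ (c.coeff i) * α ^ ((i : ℤ) * b)) *
        ((polySubst φ h (α ^ (i : ℤ)) : Polynomial E) : PowerSeries E) *
        ((∏ j ∈ c.support.erase i, polySubst φ f (α ^ (j : ℤ)) : Polynomial E) : PowerSeries E) := by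
    push_cast
    rfl
  rw [hterm, hprod, ← key (α ^ (i : ℤ))]
  ring
end

section
/- Let n and q be positive integers with gcd(q, n) = 1. Then the following are equivalent: (i) every cyclotomic coset modulo n with respect to q is closed under negation, i.e., for every residue r modulo n there exists j ∈ ℕ with r·q^j ≡ −r (mod n); (ii) there exists a positive integer m such that n divides q^m + 1. -/
/-- Lemma 3 (Symmetric Reversible Codes): every cyclotomic coset modulo `n`
with respect to `q` is closed under negation if and only if `n ∣ q^m + 1` for
some positive integer `m`. -/
theorem symmetric_reversible_iff
    (n q : ℕ) (hn : 0 < n) (hq : 0 < q) (hqn : Nat.gcd q n = 1) :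
    (∀ r : ℕ, ∃ j : ℕ, n ∣ r * q ^ j + r) ↔
      (∃ m : ℕ, 0 < m ∧ n ∣ q ^ m + 1) := by
  constructor
  · intro h
    obtain ⟨j, hj⟩ := h 1
    rw [one_mul] at hj
    rcases Nat.eq_zero_or_pos j with hj0 | hjp
    · subst hj0
      simp at hj
      -- n ∣ 2
      have hle : n ≤ 2 := Nat.le_of_dvd two_pos hj
      interval_cases n
      · exact ⟨1, one_pos, one_dvd _⟩
      · refine ⟨1, one_pos, ?_⟩
        have h2 : ¬ (2 ∣ q) := by
          intro h2
          have := Nat.dvd_gcd h2 (dvd_refl 2)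
          omega
        rw [pow_one]
        omega
    · exact ⟨j, hjp, hj⟩
  · rintro ⟨m, hm, hdvd⟩ r
    refine ⟨m, ?_⟩
    have : r * q ^ m + r = r * (q ^ m + 1) := by ring
    rw [this]
    exact hdvd.mul_left r
end

section
/- Let n > 2 and q be positive integers with gcd(q, n) = 1, let m be the smallest positive integer such that n divides q^m + 1, and let r be a positive integer with gcd(r, n) = 1. Then the cyclotomic coset M_r = { r·q^j mod n : j ∈ ℕ } has exactly 2m elements. -/
/-- Lemma 4 (Cardinality of Symmetric Reversible Codes): if `n > 2`,
`gcd(r, n) = 1` and `m` is the smallest positive integer with `n ∣ q^m + 1`,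
then the cyclotomic coset `M_r = { r·q^j mod n : j ∈ ℕ }` has exactly `2m`
elements. -/
theorem cyclotomic_coset_card_symmetric_reversible
    (n q r : ℕ) (hn : 2 < n) (hq : 0 < q) (hr : 0 < r)
    (hqn : Nat.gcd q n = 1) (hrn : Nat.gcd r n = 1)
    (m : ℕ) (hm : 0 < m) (hdvd : n ∣ q ^ m + 1)
    (hmin : ∀ t : ℕ, 0 < t → n ∣ q ^ t + 1 → m ≤ t) :
    (Set.range fun j : ℕ => r * q ^ j % n).ncard = 2 * m := by
  haveI : NeZero n := ⟨by omega⟩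
  set x : ZMod n := (q : ZMod n) with hxdef
  -- -1 ≠ 1 in ZMod n
  have hneg : (-1 : ZMod n) ≠ 1 := by
    intro h
    have h2 : ((2 : ℕ) : ZMod n) = 0 := by
      push_cast
      linear_combination -h
    rw [ZMod.natCast_eq_zero_iff] at h2
    have := Nat.le_of_dvd (by norm_num) h2
    omega
  -- x ^ m = -1
  have hxm : x ^ m = -1 := by
    have : ((q ^ m + 1 : ℕ) : ZMod n) = 0 := by
      rw [ZMod.natCast_eq_zero_iff]; exact hdvd
    push_cast at this
    linear_combination this
  have hx2m : x ^ (2 * m) = 1 := by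
    rw [two_mul, pow_add, hxm]; ring
  set d := orderOf x with hd
  have hddvd : d ∣ 2 * m := orderOf_dvd_of_pow_eq_one hx2m
  have hdpos : 0 < d :=
    (isOfFinOrder_iff_pow_eq_one.mpr ⟨2 * m, by omega, hx2m⟩).orderOf_pos
  have hdnm : ¬ d ∣ m := by
    intro h
    have : x ^ m = 1 := orderOf_dvd_iff_pow_eq_one.mp h
    rw [hxm] at this
    exact hneg this
  -- d is even and d/2 divides m
  have hdeven : 2 ∣ d := by
    rcases Nat.even_or_odd d with h | h
    · exact h.two_dvd
    · exfalso
      exact hdnm ((Nat.Coprime.dvd_of_dvd_mul_left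
        (h.coprime_two_right) hddvd))
  obtain ⟨e, he⟩ := hdeven
  have hedvd : e ∣ m := by
    have : 2 * e ∣ 2 * m := by rw [← he]; exact hddvd
    exact (mul_dvd_mul_iff_left (two_ne_zero)).mp this
  obtain ⟨t, ht⟩ := hedvd
  have hepos : 0 < e := by omega
  have hx2e : x ^ (2 * e) = 1 := by
    rw [← he]; exact pow_orderOf_eq_one x
  have htodd : Odd t := by
    rcases Nat.even_or_odd t with h | h
    · exfalso
      obtain ⟨s, hs⟩ := h
      have : x ^ m = 1 := by
        rw [ht, hs]
        have : e * (s + s) = 2 * e * s := by ring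
        rw [this, pow_mul, hx2e, one_pow]
      rw [hxm] at this
      exact hneg this
    · exact h
  have hxe : x ^ e = -1 := by
    obtain ⟨s, hs⟩ := htodd
    have : x ^ m = x ^ e := by
      rw [ht, hs]
      have : e * (2 * s + 1) = 2 * e * s + e := by ring
      rw [this, pow_add, pow_mul, hx2e, one_pow, one_mul]
    rw [← this, hxm]
  have hne : n ∣ q ^ e + 1 := by
    rw [← ZMod.natCast_eq_zero_iff]
    push_cast
    rw [← hxdef, hxe]; ring
  have hem : e = m := le_antisymm (Nat.le_of_dvd hm ⟨t, ht⟩) (hmin e hepos hne)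
  have hd2m : d = 2 * m := by omega
  -- now the cardinality
  set f : ℕ → ℕ := fun j => r * q ^ j % n with hf
  have hcast : ∀ j : ℕ, ((r * q ^ j : ℕ) : ZMod n) = (r : ZMod n) * x ^ j := by
    intro j; push_cast; ring
  -- units
  set u : (ZMod n)ˣ := ZMod.unitOfCoprime q hqn with hu
  have hux : (u : ZMod n) = x := ZMod.coe_unitOfCoprime q hqn
  have hou : orderOf u = d := by rw [hd, ← hux, orderOf_units]
  have hrunit : IsUnit (r : ZMod n) :=
    (ZMod.isUnit_iff_coprime r n).mpr hrn
  have hkey : ∀ i j : ℕ, f i = f j ↔ i ≡ j [MOD d] := by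
    intro i j
    constructor
    · intro h
      have h' : r * q ^ i ≡ r * q ^ j [MOD n] := h
      have : ((r * q ^ i : ℕ) : ZMod n) = ((r * q ^ j : ℕ) : ZMod n) :=
        (ZMod.natCast_eq_natCast_iff _ _ _).mpr h'
      rw [hcast, hcast] at this
      have hxx : x ^ i = x ^ j := hrunit.mul_left_cancel this
      have huu : u ^ i = u ^ j := Units.ext (by
        rw [Units.val_pow_eq_pow_val, Units.val_pow_eq_pow_val, hux, hxx])
      have := (pow_eq_pow_iff_modEq).mp huu
      rwa [hou] at this
    · intro h
      have hxx : x ^ i = x ^ j := by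
        rw [← hux, ← Units.val_pow_eq_pow_val, ← Units.val_pow_eq_pow_val]
        exact congrArg _ ((pow_eq_pow_iff_modEq).mpr (by rwa [hou]))
      have : ((r * q ^ i : ℕ) : ZMod n) = ((r * q ^ j : ℕ) : ZMod n) := by
        rw [hcast, hcast, hxx]
      exact (ZMod.natCast_eq_natCast_iff _ _ _).mp this
  have hrange : Set.range f = ↑(Finset.image f (Finset.range d)) := by
    ext y
    simp only [Set.mem_range, Finset.coe_image, Set.mem_image, Finset.mem_coe,
      Finset.mem_range]
    constructor
    · rintro ⟨j, rfl⟩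
      exact ⟨j % d, Nat.mod_lt _ hdpos,
        (hkey _ _).mpr (Nat.mod_modEq j d)⟩
    · rintro ⟨j, _, rfl⟩
      exact ⟨j, rfl⟩
  rw [hrange, Set.ncard_coe_finset, Finset.card_image_of_injOn, Finset.card_range, hd2m]
  intro i hi j hj hij
  simp only [Finset.mem_coe, Finset.mem_range] at hi hj
  have := (hkey i j).mp hij
  rwa [Nat.ModEq, Nat.mod_eq_of_lt hi, Nat.mod_eq_of_lt hj] at this
end

section
/- (Hartmann–Tzeng bound.) Let F be a finite field and E an extension field of F, let n be a positive integer and α ∈ E an element of multiplicative order exactly n. Let b, m₁, m₂ be integers with gcd(n, m₁) = 1 and gcd(n, m₂) = 1, and let d₀ ≥ 2 and ν ≥ 0 be integers. If c ∈ F[X] is nonzero with deg c < n and c(α^{b + i₁·m₁ + i₂·m₂}) = 0 for all i₁ = 0, …, d₀ − 2 and all i₂ = 0, …, ν, then the Hamming weight of c is at least d₀ + ν. -/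
open Polynomial

/-- Square Vandermonde-type lemma: if `u` is orthogonal to the first `|A|`
power vectors of pairwise-distinct nodes `x s`, `s ∈ A`, then `u` vanishes on `A`. -/
lemma ht_vandermonde {E : Type*} [Field E] (A : Finset ℕ) (x : ℕ → E)
    (hx : Set.InjOn x A) (u : ℕ → E)
    (h : ∀ i < A.card, ∑ s ∈ A, u s * x s ^ i = 0) :
    ∀ s ∈ A, u s = 0 := by
  intro s₀ hs₀
  set P : Polynomial E := ∏ t ∈ A.erase s₀, (X - C (x t)) with hP
  have hcard : 1 ≤ A.card := Finset.card_pos.mpr ⟨s₀, hs₀⟩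
  have hPdeg : P.natDegree < A.card := by
    have h1 : P.natDegree ≤ ∑ t ∈ A.erase s₀, (X - C (x t)).natDegree :=
      Polynomial.natDegree_prod_le _ _
    have h2 : ∑ t ∈ A.erase s₀, (X - C (x t)).natDegree = (A.erase s₀).card := by
      simp [Polynomial.natDegree_X_sub_C]
    have h3 : (A.erase s₀).card = A.card - 1 := Finset.card_erase_of_mem hs₀
    omega
  have key : ∑ s ∈ A, u s * P.eval (x s) = 0 := by
    have heval : ∀ s : ℕ, P.eval (x s) = ∑ i ∈ Finset.range A.card, P.coeff i * x s ^ i :=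
      fun s => Polynomial.eval_eq_sum_range' hPdeg _
    calc ∑ s ∈ A, u s * P.eval (x s)
        = ∑ s ∈ A, ∑ i ∈ Finset.range A.card, P.coeff i * (u s * x s ^ i) := by
          refine Finset.sum_congr rfl fun s _ => ?_
          rw [heval, Finset.mul_sum]
          exact Finset.sum_congr rfl fun i _ => by ring
      _ = ∑ i ∈ Finset.range A.card, P.coeff i * ∑ s ∈ A, u s * x s ^ i := by
          rw [Finset.sum_comm]
          exact Finset.sum_congr rfl fun i _ => by rw [Finset.mul_sum]
      _ = 0 := by
          refine Finset.sum_eq_zero fun i hi => ?_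
          rw [h i (Finset.mem_range.mp hi), mul_zero]
  have hzero : ∀ t ∈ A, t ≠ s₀ → u t * P.eval (x t) = 0 := by
    intro t ht hne
    have : P.eval (x t) = 0 := by
      rw [hP, Polynomial.eval_prod]
      exact Finset.prod_eq_zero (Finset.mem_erase.mpr ⟨hne, ht⟩) (by simp)
    rw [this, mul_zero]
  have hsingle : ∑ s ∈ A, u s * P.eval (x s) = u s₀ * P.eval (x s₀) :=
    Finset.sum_eq_single_of_mem s₀ hs₀ hzero
  have hPs₀ : P.eval (x s₀) ≠ 0 := by
    rw [hP, Polynomial.eval_prod]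
    refine Finset.prod_ne_zero_iff.mpr fun t ht => ?_
    have ht' := Finset.mem_erase.mp ht
    simp only [Polynomial.eval_sub, Polynomial.eval_X, Polynomial.eval_C, sub_ne_zero]
    exact fun hxx => ht'.1 (hx ht'.2 hs₀ hxx.symm)
  have : u s₀ * P.eval (x s₀) = 0 := by rw [← hsingle, key]
  exact (mul_eq_zero.mp this).resolve_right hPs₀

/-- Injectivity of `s ↦ α^(m*s)` on `[0, n)` when `gcd(n, m) = 1`. -/
lemma ht_inj {E : Type*} [Field E] {n : ℕ} (hn : 0 < n) {α : E} (hα0 : α ≠ 0)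
    (hα : orderOf α = n) {m : ℤ} (hm : Int.gcd (n : ℤ) m = 1) :
    ∀ s t : ℕ, s < n → t < n → α ^ (m * s) = α ^ (m * t) → s = t := by
  intro s t hs ht heq
  set U : Eˣ := Units.mk0 α hα0 with hU
  have hUord : orderOf U = n := by rw [← orderOf_units]; exact hα
  have hUeq : U ^ (m * (s : ℤ)) = U ^ (m * (t : ℤ)) := by
    ext
    rw [Units.val_zpow_eq_zpow_val, Units.val_zpow_eq_zpow_val]
    exact heq
  have h1 : U ^ (((s : ℤ) - t) * m) = 1 := by
    have : ((s : ℤ) - t) * m = m * s - m * t := by ring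
    rw [this, zpow_sub, hUeq, mul_inv_cancel]
  have h2 : ((n : ℤ)) ∣ ((s : ℤ) - t) * m := by
    rw [← hUord]
    exact orderOf_dvd_iff_zpow_eq_one.mpr h1
  have h3 : ((n : ℤ)) ∣ ((s : ℤ) - t) := Int.dvd_of_dvd_mul_left_of_gcd_one h2 hm
  have h4 : (s : ℤ) - t = 0 := by
    refine Int.eq_zero_of_abs_lt_dvd h3 ?_
    rw [abs_sub_lt_iff]
    constructor <;> [skip; skip] <;> push_cast <;> omega
  omega

/-- Theorem 1 (Hartmann–Tzeng bound): if the codeword `c` vanishes at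
`α^{b + i₁·m₁ + i₂·m₂}` for all `0 ≤ i₁ ≤ d₀−2` and `0 ≤ i₂ ≤ ν`, with
`gcd(n, m₁) = gcd(n, m₂) = 1`, then its Hamming weight is at least `d₀ + ν`. -/
theorem hartmann_tzeng_bound
    (F E : Type*) [Field F] [Fintype F] [Field E] [Algebra F E]
    (n : ℕ) (hn : 0 < n) (α : E) (hα : orderOf α = n)
    (b m₁ m₂ : ℤ) (hm₁ : Int.gcd (n : ℤ) m₁ = 1) (hm₂ : Int.gcd (n : ℤ) m₂ = 1)
    (d₀ ν : ℕ) (hd₀ : 2 ≤ d₀)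
    (c : Polynomial F) (hc : c ≠ 0) (hcdeg : c.natDegree < n)
    (hzero : ∀ i₁ i₂ : ℕ, i₁ ≤ d₀ - 2 → i₂ ≤ ν →
      (c.map (algebraMap F E)).eval (α ^ (b + (i₁ : ℤ) * m₁ + (i₂ : ℤ) * m₂)) = 0) :
    d₀ + ν ≤ c.support.card := by
  classical
  by_contra hcon
  push_neg at hcon
  set f := algebraMap F E with hf
  have hfinj : Function.Injective f := (algebraMap F E).injective
  set S := c.support with hS
  set w := S.card with hw
  have hα0 : α ≠ 0 := by
    intro h0
    have h1 : α ^ n = 1 := by rw [← hα]; exact pow_orderOf_eq_one α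
    rw [h0, zero_pow hn.ne'] at h1
    exact zero_ne_one h1
  have hw1 : 1 ≤ w := Finset.card_pos.mpr (Polynomial.support_nonempty.mpr hc)
  set k := w - min w (d₀ - 1) with hk
  have hkν : k ≤ ν := by omega
  have hkw : k < w := by omega
  -- members of S are < n
  have hSn : ∀ s ∈ S, s < n := fun s hs =>
    lt_of_le_of_lt (Polynomial.le_natDegree_of_mem_supp s hs) hcdeg
  -- the three node/coefficient functions
  set xs : ℕ → E := fun s => α ^ (m₁ * (s : ℤ)) with hxs
  set ys : ℕ → E := fun s => α ^ (m₂ * (s : ℤ)) with hys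
  set as : ℕ → E := fun s => f (c.coeff s) * α ^ (b * (s : ℤ)) with has
  have hxinj : Set.InjOn xs S := fun s hs t ht h =>
    ht_inj hn hα0 hα hm₁ s t (hSn s hs) (hSn t ht) h
  have hyinj : Set.InjOn ys S := fun s hs t ht h =>
    ht_inj hn hα0 hα hm₂ s t (hSn s hs) (hSn t ht) h
  have has0 : ∀ s ∈ S, as s ≠ 0 := by
    intro s hs
    have h1 : c.coeff s ≠ 0 := Polynomial.mem_support_iff.mp hs
    have h2 : f (c.coeff s) ≠ 0 := fun h => h1 (hfinj (h.trans (map_zero f).symm))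
    exact mul_ne_zero h2 (zpow_ne_zero _ hα0)
  -- rewrite hzero as syndrome sums
  have hsum : ∀ i₁ i₂ : ℕ, i₁ < d₀ - 1 → i₂ ≤ ν →
      ∑ s ∈ S, as s * xs s ^ i₁ * ys s ^ i₂ = 0 := by
    intro i₁ i₂ hi₁ hi₂
    have h0 := hzero i₁ i₂ (by omega) hi₂
    set z : ℤ := b + (i₁ : ℤ) * m₁ + (i₂ : ℤ) * m₂ with hz
    have hsupp : (c.map f).support = S := Polynomial.support_map_of_injective c hfinj
    have heval : (c.map f).eval (α ^ z) = ∑ s ∈ S, f (c.coeff s) * (α ^ z) ^ s := by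
      rw [Polynomial.eval_eq_sum, Polynomial.sum_def, hsupp]
      exact Finset.sum_congr rfl fun s _ => by rw [Polynomial.coeff_map]
    rw [heval] at h0
    rw [← h0]
    refine Finset.sum_congr rfl fun s hs => ?_
    have hterm : (α ^ z) ^ s = α ^ (b * (s : ℤ)) * (α ^ (m₁ * (s : ℤ))) ^ i₁
        * (α ^ (m₂ * (s : ℤ))) ^ i₂ := by
      rw [← zpow_natCast (α ^ z) s, ← zpow_mul,
        ← zpow_natCast (α ^ (m₁ * (s : ℤ))) i₁, ← zpow_natCast (α ^ (m₂ * (s : ℤ))) i₂,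
        ← zpow_mul, ← zpow_mul, ← zpow_add₀ hα0, ← zpow_add₀ hα0]
      congr 1
      rw [hz]
      ring
    rw [hxs, hys, has]
    simp only []
    rw [hterm]
    ring
  -- choose a subset T of size k
  obtain ⟨T, hTsub, hTcard⟩ := Finset.exists_subset_card_eq (s := S) (n := k) (by omega)
  -- the k+1 restricted syndrome vectors cannot be independent
  have hnotli : ¬ LinearIndependent E (fun (j : Fin (k + 1)) (t : T) =>
      as t * ys t ^ (j : ℕ)) := by
    intro hli
    have h1 := hli.fintype_card_le_finrank
    rw [Module.finrank_pi, Fintype.card_coe, hTcard, Fintype.card_fin] at h1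
    omega
  obtain ⟨g, hg0, j₀, hgj₀⟩ := Fintype.not_linearIndependent_iff.mp hnotli
  set v : ℕ → E := fun s => ∑ j : Fin (k + 1), g j * (as s * ys s ^ (j : ℕ)) with hv
  have hvT : ∀ t ∈ T, v t = 0 := by
    intro t ht
    have := congr_fun hg0 ⟨t, ht⟩
    simpa [hv, Finset.sum_apply] using this
  have hvS : ∀ i, i < d₀ - 1 → ∑ s ∈ S, v s * xs s ^ i = 0 := by
    intro i hi
    calc ∑ s ∈ S, v s * xs s ^ i
        = ∑ s ∈ S, ∑ j : Fin (k + 1), g j * (as s * xs s ^ i * ys s ^ (j : ℕ)) := by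
          refine Finset.sum_congr rfl fun s _ => ?_
          rw [hv]
          simp only []
          rw [Finset.sum_mul]
          exact Finset.sum_congr rfl fun j _ => by ring
      _ = ∑ j : Fin (k + 1), g j * ∑ s ∈ S, as s * xs s ^ i * ys s ^ (j : ℕ) := by
          rw [Finset.sum_comm]
          exact Finset.sum_congr rfl fun j _ => by rw [Finset.mul_sum]
      _ = 0 := by
          refine Finset.sum_eq_zero fun j _ => ?_
          rw [hsum i (j : ℕ) hi (le_trans (by omega) hkν), mul_zero]
  -- v vanishes on S \ T, hence on all of S
  have hcardST : (S \ T).card = w - k := by rw [Finset.card_sdiff_of_subset hTsub, hTcard]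
  have hvST : ∀ s ∈ S \ T, v s = 0 := by
    refine ht_vandermonde (S \ T) xs (hxinj.mono (by exact_mod_cast Finset.sdiff_subset)) v ?_
    intro i hi
    rw [hcardST] at hi
    have hiS : i < d₀ - 1 := by omega
    have hsplit : ∑ s ∈ S \ T, v s * xs s ^ i + ∑ s ∈ T, v s * xs s ^ i
        = ∑ s ∈ S, v s * xs s ^ i := Finset.sum_sdiff hTsub
    have hTzero : ∑ s ∈ T, v s * xs s ^ i = 0 :=
      Finset.sum_eq_zero fun t ht => by rw [hvT t ht, zero_mul]
    rw [hTzero, add_zero, hvS i hiS] at hsplit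
    exact hsplit
  have hvzero : ∀ s ∈ S, v s = 0 := by
    intro s hs
    by_cases hsT : s ∈ T
    · exact hvT s hsT
    · exact hvST s (Finset.mem_sdiff.mpr ⟨hs, hsT⟩)
  -- the dependence polynomial
  set P : Polynomial E := ∑ j : Fin (k + 1), C (g j) * X ^ (j : ℕ) with hP
  have hPne : P ≠ 0 := by
    intro h0
    have h1 : P.coeff (j₀ : ℕ) = g j₀ := by
      rw [hP, Polynomial.finset_sum_coeff]
      rw [Finset.sum_eq_single j₀]
      · simp
      · intro j _ hj
        simp only [Polynomial.coeff_C_mul, Polynomial.coeff_X_pow]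
        rw [if_neg (fun h => hj (Fin.val_injective h.symm)), mul_zero]
      · intro h; exact absurd (Finset.mem_univ j₀) h
    rw [h0] at h1
    simp at h1
    exact hgj₀ h1.symm
  have hPdeg : P.natDegree ≤ k := by
    refine le_trans (Polynomial.natDegree_sum_le _ _) ?_
    rw [Finset.fold_max_le]
    refine ⟨by omega, fun j _ => ?_⟩
    exact le_trans (Polynomial.natDegree_C_mul_X_pow_le (g j) (j : ℕ)) (by omega)
  have hProots : ∀ s ∈ S, P.eval (ys s) = 0 := by
    intro s hs
    have h1 : v s = as s * P.eval (ys s) := by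
      rw [hv, hP]
      simp only [Polynomial.eval_finset_sum, Polynomial.eval_mul, Polynomial.eval_C,
        Polynomial.eval_pow, Polynomial.eval_X, Finset.mul_sum]
      exact Finset.sum_congr rfl fun j _ => by ring
    have h2 := hvzero s hs
    rw [h1] at h2
    exact (mul_eq_zero.mp h2).resolve_left (has0 s hs)
  -- count roots
  have himg : (S.image ys).card = w := Finset.card_image_of_injOn hyinj
  have hsub : S.image ys ⊆ P.roots.toFinset := by
    intro y hy
    obtain ⟨s, hs, rfl⟩ := Finset.mem_image.mp hy
    rw [Multiset.mem_toFinset, Polynomial.mem_roots hPne]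
    exact hProots s hs
  have hcount : w ≤ k := by
    calc w = (S.image ys).card := himg.symm
      _ ≤ P.roots.toFinset.card := Finset.card_le_card hsub
      _ ≤ Multiset.card P.roots := Multiset.toFinset_card_le _
      _ ≤ P.natDegree := Polynomial.card_roots' P
      _ ≤ k := hPdeg
  omega
end

section
/- Let F be a finite field and E an extension field of F, let n be a positive integer, α ∈ E of multiplicative order exactly n, and b an integer. Let h, f ∈ F[X], let e ∈ F[X] with deg e < n have support set 𝓔, and define Ω(X) = Σ_{i∈𝓔} e_i α^{i b} h(α^i X) ∏_{j∈𝓔, j≠i} f(α^j X) ∈ E[X]. Let ℓ ∈ 𝓔 and let β ∈ E satisfy f(α^ℓ β) = 0 and f(α^j β) ≠ 0 for every j ∈ 𝓔 with j ≠ ℓ, and suppose h(α^ℓ β) ≠ 0. Then the error value e_ℓ is given by e_ℓ = Ω(β) / ( α^{ℓ b} · h(α^ℓ β) · ∏_{j∈𝓔, j≠ℓ} f(α^j β) ). -/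
open Polynomial

/-- Lemma 6 (Generalized Error Evaluation), the generalization of Forney's
formula: the error value `e_ℓ` is `Ω(β)` divided by
`α^{ℓb}·h(α^ℓβ)·∏_{j∈𝓔, j≠ℓ} f(α^jβ)`. -/
theorem generalized_error_evaluation
    (F E : Type*) [Field F] [Fintype F] [Field E] [Algebra F E]
    (n : ℕ) (hn : 0 < n) (α : E) (hα : orderOf α = n) (b : ℤ)
    (h f : Polynomial F)
    (e : Polynomial F) (hedeg : e.natDegree < n)
    (Ω : Polynomial E)
    (hΩ : Ω = ∑ i ∈ e.support,
      Polynomial.C (algebraMap F E (e.coeff i) * α ^ ((i : ℤ) * b)) *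
        polySubst (algebraMap F E) h (α ^ (i : ℤ)) *
        ∏ j ∈ e.support.erase i, polySubst (algebraMap F E) f (α ^ (j : ℤ)))
    (ℓ : ℕ) (hℓ : ℓ ∈ e.support) (β : E)
    (hroot : (f.map (algebraMap F E)).eval (α ^ (ℓ : ℤ) * β) = 0)
    (hnonroot : ∀ j ∈ e.support, j ≠ ℓ →
      (f.map (algebraMap F E)).eval (α ^ (j : ℤ) * β) ≠ 0)
    (hh : (h.map (algebraMap F E)).eval (α ^ (ℓ : ℤ) * β) ≠ 0) :
    algebraMap F E (e.coeff ℓ) =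
      Ω.eval β /
        (α ^ ((ℓ : ℤ) * b) * (h.map (algebraMap F E)).eval (α ^ (ℓ : ℤ) * β) *
          ∏ j ∈ e.support.erase ℓ,
            (f.map (algebraMap F E)).eval (α ^ (j : ℤ) * β)) := by
  have hev : ∀ (g : Polynomial F) (γ : E),
      (polySubst (algebraMap F E) g γ).eval β = (g.map (algebraMap F E)).eval (γ * β) := by
    intro g γ
    simp [polySubst, eval_comp]
  have hα0 : α ≠ 0 := by
    intro h0
    have := pow_orderOf_eq_one α
    rw [hα, h0, zero_pow hn.ne'] at this
    exact zero_ne_one this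
  have hΩβ : Ω.eval β =
      algebraMap F E (e.coeff ℓ) * α ^ ((ℓ : ℤ) * b) *
        (h.map (algebraMap F E)).eval (α ^ (ℓ : ℤ) * β) *
        ∏ j ∈ e.support.erase ℓ, (f.map (algebraMap F E)).eval (α ^ (j : ℤ) * β) := by
    rw [hΩ, eval_finset_sum]
    rw [Finset.sum_eq_single ℓ]
    · simp [hev, eval_prod, mul_assoc]
    · intro i hi hiℓ
      simp only [eval_mul, eval_C, eval_prod, hev]
      have hmem : ℓ ∈ e.support.erase i := Finset.mem_erase.2 ⟨fun hc => hiℓ hc.symm, hℓ⟩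
      rw [Finset.prod_eq_zero hmem hroot]
      ring
    · intro hc
      exact absurd hℓ hc
  have hd : α ^ ((ℓ : ℤ) * b) * (h.map (algebraMap F E)).eval (α ^ (ℓ : ℤ) * β) *
      ∏ j ∈ e.support.erase ℓ, (f.map (algebraMap F E)).eval (α ^ (j : ℤ) * β) ≠ 0 := by
    apply mul_ne_zero (mul_ne_zero (zpow_ne_zero _ hα0) hh)
    apply Finset.prod_ne_zero_iff.2
    intro j hj
    exact hnonroot j (Finset.mem_of_mem_erase hj) (Finset.ne_of_mem_erase hj)
  rw [hΩβ, eq_div_iff hd]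
  ring
end

section
/- (Boston's bound 1 via rational functions.) Let F be a finite field and E an extension field of F, let n be a positive integer with gcd(n, 3) = 1, and let α ∈ E have multiplicative order exactly n. If c ∈ F[X] is nonzero with deg c < n and c(α^i) = 0 for all i ∈ {0, 1, 3, 4}, then the Hamming weight of c is at least 4. -/
open Polynomial

private lemma pow_inj_of_orderOf {E : Type*} [Field E] {β : E} {n : ℕ} (hn : 0 < n)
    (hβ : orderOf β = n) {a b : ℕ} (ha : a < n) (hb : b < n) (h : β ^ a = β ^ b) : a = b := by
  have hβ1 : β ^ n = 1 := by rw [← hβ]; exact pow_orderOf_eq_one β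
  have hβ0 : β ≠ 0 := by
    rintro rfl
    rw [zero_pow hn.ne'] at hβ1
    exact one_ne_zero hβ1.symm
  wlog hab : a ≤ b generalizing a b
  · exact (this hb ha h.symm (le_of_not_ge hab)).symm
  have hm : β ^ a * β ^ (b - a) = β ^ a * 1 := by
    rw [mul_one, ← pow_add, Nat.add_sub_cancel' hab, h]
  have h1 : β ^ (b - a) = 1 := mul_left_cancel₀ (pow_ne_zero _ hβ0) hm
  have hdvd := orderOf_dvd_of_pow_eq_one h1
  rw [hβ] at hdvd
  have := Nat.eq_zero_of_dvd_of_lt hdvd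
  omega

/-- Boston's bound 1 via rational functions: if `gcd(n, 3) = 1` and the
codeword `c` vanishes at `α^i` for `i ∈ {0, 1, 3, 4}`, then `wt(c) ≥ 4`. -/
theorem boston_bound_one
    (F E : Type*) [Field F] [Fintype F] [Field E] [Algebra F E]
    (n : ℕ) (hn : 0 < n) (hn3 : Nat.gcd n 3 = 1)
    (α : E) (hα : orderOf α = n)
    (c : Polynomial F) (hc : c ≠ 0) (hcdeg : c.natDegree < n)
    (hzero : ∀ i ∈ ({0, 1, 3, 4} : Finset ℕ),
      (c.map (algebraMap F E)).eval (α ^ i) = 0) :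
    4 ≤ c.support.card := by
  by_contra hlt
  push_neg at hlt
  set φ := algebraMap F E with hφ
  have hφi : Function.Injective φ := (algebraMap F E).injective
  set d := c.map φ with hd
  have hsupp : d.support = c.support := support_map_of_injective c hφi
  have hd0 : d ≠ 0 := fun h => hc ((Polynomial.map_eq_zero_iff hφi).mp h)
  -- evaluation as a sum over support
  have heval : ∀ i : ℕ, i ∈ ({0, 1, 3, 4} : Finset ℕ) →
      ∑ j ∈ c.support, d.coeff j * (α ^ i) ^ j = 0 := by
    intro i hi
    have := hzero i hi
    rwa [eval_eq_sum, Polynomial.sum_def, hsupp] at this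
  have hcoeff0 : ∀ j ∈ c.support, d.coeff j ≠ 0 := by
    intro j hj
    rw [← hsupp] at hj
    exact mem_support_iff.mp hj
  have hjlt : ∀ j ∈ c.support, j < n := fun j hj =>
    lt_of_le_of_lt (le_natDegree_of_mem_supp j hj) hcdeg
  have hinj : ∀ {a b : ℕ}, a < n → b < n → α ^ a = α ^ b → a = b := fun ha hb h =>
    pow_inj_of_orderOf hn hα ha hb h
  have hcard1 : 1 ≤ c.support.card :=
    Finset.card_pos.mpr (nonempty_support_iff.mpr hc)
  interval_cases h : c.support.card
  · -- card 1
    obtain ⟨a, hs⟩ := Finset.card_eq_one.mp h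
    have h0 := heval 0 (by decide)
    rw [hs, Finset.sum_singleton] at h0
    simp at h0
    exact hcoeff0 a (hs ▸ Finset.mem_singleton_self a) h0
  · -- card 2
    obtain ⟨a, b, hab, hs⟩ := Finset.card_eq_two.mp h
    have hma : a ∈ c.support := hs ▸ by simp
    have hmb : b ∈ c.support := hs ▸ by simp
    have h0 := heval 0 (by decide)
    have h1 := heval 1 (by decide)
    rw [hs, Finset.sum_insert (by simpa using hab), Finset.sum_singleton] at h0 h1
    simp only [pow_zero, one_pow, mul_one, pow_one] at h0 h1
    have hu := hcoeff0 a hma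
    have : d.coeff a * (α ^ a - α ^ b) = 0 := by
      have : d.coeff b = -d.coeff a := by linear_combination h0
      rw [this] at h1
      linear_combination h1
    have := hinj (hjlt a hma) (hjlt b hmb)
      (by rcases mul_eq_zero.mp this with h' | h'; · exact absurd h' hu
          · exact sub_eq_zero.mp h')
    exact hab this
  · -- card 3
    obtain ⟨a, b, e, hab, hae, hbe, hs⟩ := Finset.card_eq_three.mp h
    have hma : a ∈ c.support := hs ▸ by simp
    have hmb : b ∈ c.support := hs ▸ by simp
    have hme : e ∈ c.support := hs ▸ by simp
    set u := d.coeff a; set v := d.coeff b; set w := d.coeff e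
    set x := α ^ a; set y := α ^ b; set z := α ^ e
    have hsum : ∀ i ∈ ({0, 1, 3, 4} : Finset ℕ),
        u * x ^ i + v * y ^ i + w * z ^ i = 0 := by
      intro i hi
      have := heval i hi
      rw [hs, Finset.sum_insert (by simp [hab, hae]),
        Finset.sum_insert (by simpa using hbe), Finset.sum_singleton] at this
      simp only [← pow_mul, mul_comm] at this ⊢
      linear_combination this
    have h0 := hsum 0 (by decide)
    have h1 := hsum 1 (by decide)
    have h3 := hsum 3 (by decide)
    have h4 := hsum 4 (by decide)
    simp only [pow_zero, mul_one, pow_one] at h0 h1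
    have hu : u ≠ 0 := hcoeff0 a hma
    have hv : v ≠ 0 := hcoeff0 b hmb
    have hxy : x ≠ y := fun h' => hab (hinj (hjlt a hma) (hjlt b hmb) h')
    have hxz : x ≠ z := fun h' => hae (hinj (hjlt a hma) (hjlt e hme) h')
    have hyz : y ≠ z := fun h' => hbe (hinj (hjlt b hmb) (hjlt e hme) h')
    -- eliminate w
    have A1 : u * (x - z) + v * (y - z) = 0 := by linear_combination h1 - z * h0
    have A3 : u * (x^3 - z^3) + v * (y^3 - z^3) = 0 := by linear_combination h3 - z^3 * h0
    have A4 : u * (x^4 - z^4) + v * (y^4 - z^4) = 0 := by linear_combination h4 - z^4 * h0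
    have B3 : (x - z) * (y^3 - z^3) = (x^3 - z^3) * (y - z) := by
      have := mul_left_cancel₀ hu
        (show u * ((x - z) * (y^3 - z^3)) = u * ((x^3 - z^3) * (y - z)) by
          linear_combination (y^3 - z^3) * A1 - (y - z) * A3)
      exact this
    have B4 : (x - z) * (y^4 - z^4) = (x^4 - z^4) * (y - z) := by
      exact mul_left_cancel₀ hu
        (show u * ((x - z) * (y^4 - z^4)) = u * ((x^4 - z^4) * (y - z)) by
          linear_combination (y^4 - z^4) * A1 - (y - z) * A4)
    have hne : (x - z) * (y - z) * (y - x) ≠ 0 :=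
      mul_ne_zero (mul_ne_zero (sub_ne_zero.mpr hxz) (sub_ne_zero.mpr hyz))
        (sub_ne_zero.mpr (Ne.symm hxy))
    have he1 : x + y + z = 0 := by
      have : (x - z) * (y - z) * (y - x) * (x + y + z) = 0 := by linear_combination B3
      rcases mul_eq_zero.mp this with h' | h'
      · exact absurd h' hne
      · exact h'
    have he2' : x^2 + y^2 + z^2 + x*y + y*z + z*x = 0 := by
      have : (x - z) * (y - z) * (y - x) * (x^2 + y^2 + z^2 + x*y + y*z + z*x) = 0 := by
        linear_combination B4
      rcases mul_eq_zero.mp this with h' | h'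
      · exact absurd h' hne
      · exact h'
    have he2 : x*y + y*z + z*x = 0 := by
      linear_combination (x + y + z) * he1 - he2'
    have hx3y3 : x ^ 3 = y ^ 3 := by
      have h' : x^2 + x*y + y^2 = 0 := by
        linear_combination (x + y) * he1 - he2
      linear_combination (x - y) * h'
    -- α^3 has order n
    have hord3 : orderOf (α ^ 3) = n := by
      have : (orderOf α).Coprime 3 := by rw [hα]; exact hn3
      rw [this.orderOf_pow, hα]
    have : (α ^ 3) ^ a = (α ^ 3) ^ b := by
      rw [pow_right_comm α 3 a, pow_right_comm α 3 b]; exact hx3y3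
    exact hab (pow_inj_of_orderOf hn hord3 (hjlt a hma) (hjlt b hmb) this)
end

section
/- (Boston's bound 5 via rational functions.) Let F be a finite field and E an extension field of F, let n be a positive integer with gcd(n, 3) = 1, and let α ∈ E have multiplicative order exactly n. If c ∈ F[X] is nonzero with deg c < n and c(α^i) = 0 for all i ∈ {0, 1, 3, 4, 6}, then the Hamming weight of c is at least 5. -/
open Polynomial Finset

section aux

variable {E : Type*} [Field E]

/-- Lagrange-style vanishing: if weighted power sums at distinct nodes vanish for all
exponents below the number of nodes, then all weights vanish. -/
lemma lagrange_kill (S : Finset ℕ) (a γ : ℕ → E)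
    (hinj : Set.InjOn γ S) (N : ℕ) (hN : S.card ≤ N)
    (H : ∀ m < N, ∑ j ∈ S, a j * γ j ^ m = 0) :
    ∀ k ∈ S, a k = 0 := by
  intro k hk
  set L : Polynomial E := ∏ l ∈ S.erase k, (X - C (γ l)) with hL
  have hdeg : L.natDegree = (S.erase k).card := by
    rw [hL, natDegree_prod_of_monic _ _ (fun l _ => monic_X_sub_C _)]
    simp [natDegree_X_sub_C]
  have hdegN : L.natDegree < N := by
    have : (S.erase k).card < S.card := card_erase_lt_of_mem hk
    omega
  have key : ∑ j ∈ S, a j * L.eval (γ j) = 0 := by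
    calc ∑ j ∈ S, a j * L.eval (γ j)
        = ∑ j ∈ S, ∑ m ∈ range (L.natDegree + 1), L.coeff m * (a j * γ j ^ m) := by
          refine Finset.sum_congr rfl fun j _ => ?_
          rw [eval_eq_sum_range, Finset.mul_sum]
          exact Finset.sum_congr rfl fun m _ => by ring
      _ = ∑ m ∈ range (L.natDegree + 1), L.coeff m * ∑ j ∈ S, a j * γ j ^ m := by
          rw [Finset.sum_comm]
          simp [Finset.mul_sum]
      _ = 0 := by
          refine Finset.sum_eq_zero fun m hm => ?_
          have hmN : m < N := by have := mem_range.mp hm; omega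
          rw [H m hmN, mul_zero]
  have hsingle : ∑ j ∈ S, a j * L.eval (γ j) = a k * L.eval (γ k) := by
    refine Finset.sum_eq_single_of_mem k hk fun j hj hjk => ?_
    have hz : L.eval (γ j) = 0 := by
      rw [hL, eval_prod]
      exact Finset.prod_eq_zero (Finset.mem_erase.mpr ⟨hjk, hj⟩) (by simp)
    rw [hz, mul_zero]
  have hne : L.eval (γ k) ≠ 0 := by
    rw [hL, eval_prod]
    refine Finset.prod_ne_zero_iff.mpr fun l hl => ?_
    have hl' := Finset.mem_erase.mp hl
    simp only [eval_sub, eval_X, eval_C]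
    exact sub_ne_zero.mpr fun h => hl'.1 (hinj hl'.2 hk h.symm)
  rw [hsingle] at key
  exact (mul_eq_zero.mp key).resolve_right hne

end aux

/-- Boston's bound 5 via rational functions: if `gcd(n, 3) = 1` and the
codeword `c` vanishes at `α^i` for `i ∈ {0, 1, 3, 4, 6}`, then `wt(c) ≥ 5`. -/
theorem boston_bound_five
    (F E : Type*) [Field F] [Fintype F] [Field E] [Algebra F E]
    (n : ℕ) (hn : 0 < n) (hn3 : Nat.gcd n 3 = 1)
    (α : E) (hα : orderOf α = n)
    (c : Polynomial F) (hc : c ≠ 0) (hcdeg : c.natDegree < n)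
    (hzero : ∀ i ∈ ({0, 1, 3, 4, 6} : Finset ℕ),
      (c.map (algebraMap F E)).eval (α ^ i) = 0) :
    5 ≤ c.support.card := by
  by_contra hlt
  push_neg at hlt
  have hφ : Function.Injective (algebraMap F E) := (algebraMap F E).injective
  set cE := c.map (algebraMap F E) with hcE
  have hsupp : cE.support = c.support := support_map_of_injective c hφ
  set S := c.support with hS
  set β : ℕ → E := fun j => α ^ j with hβ
  have hαn : α ^ n = 1 := by rw [← hα]; exact pow_orderOf_eq_one α
  have hβn : ∀ j, β j ^ n = 1 := fun j => by
    rw [hβ]; rw [← pow_mul, mul_comm, pow_mul, hαn, one_pow]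
  have hβ0 : ∀ j, β j ≠ 0 := fun j h => by
    have h2 := hβn j; rw [h, zero_pow hn.ne'] at h2; exact zero_ne_one h2
  have hα0 : α ≠ 0 := hβ0 1 ∘ (by simp [hβ] : β 1 = α).trans
  -- injectivity of powers below n
  have hpow_inj : ∀ j < n, ∀ k < n, α ^ j = α ^ k → j = k := by
    have base : ∀ j k, j ≤ k → k < n → α ^ j = α ^ k → j = k := by
      intro j k hjk hkn h
      have h1 : α ^ j * α ^ (k - j) = α ^ j * 1 := by
        rw [← pow_add, mul_one, Nat.add_sub_cancel' hjk, h]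
      have h2 : α ^ (k - j) = 1 := by
        exact mul_left_cancel₀ (pow_ne_zero _ hα0) h1
      have h3 : n ∣ k - j := by rw [← hα]; exact orderOf_dvd_of_pow_eq_one h2
      have h4 : k - j < n := by omega
      have h5 : k - j = 0 := Nat.eq_zero_of_dvd_of_lt h3 h4
      omega
    intro j hj k hk h
    rcases le_total j k with hle | hle
    · exact base j k hle hk h
    · exact (base k j hle hj h.symm).symm
  have hjlt : ∀ j ∈ S, j < n := fun j hj =>
    lt_of_le_of_lt (le_natDegree_of_mem_supp j hj) hcdeg
  have hβinj : Set.InjOn β S := fun j hj k hk h =>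
    hpow_inj j (hjlt j hj) k (hjlt k hk) h
  -- cube injectivity on n-th roots of unity
  have hcube : ∀ x y : E, x ^ n = 1 → y ^ n = 1 → x ^ 3 = y ^ 3 → x = y := by
    intro x y hx hy hxy
    have hy0 : y ≠ 0 := fun h => by rw [h, zero_pow hn.ne'] at hy; exact zero_ne_one hy
    have hz3 : (x / y) ^ 3 = 1 := by
      rw [div_pow, hxy, div_self (pow_ne_zero _ hy0)]
    have hzn : (x / y) ^ n = 1 := by
      rw [div_pow, hx, hy, div_self one_ne_zero]
    have h1 : orderOf (x / y) ∣ 3 := orderOf_dvd_of_pow_eq_one hz3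
    have h2 : orderOf (x / y) ∣ n := orderOf_dvd_of_pow_eq_one hzn
    have h3 : orderOf (x / y) ∣ 1 := hn3 ▸ Nat.dvd_gcd h2 h1
    have h4 : x / y = 1 := orderOf_eq_one_iff.mp (Nat.dvd_one.mp h3)
    field_simp at h4
    exact h4
  set a : ℕ → E := fun j => algebraMap F E (c.coeff j) with ha
  have haj : ∀ j ∈ S, a j ≠ 0 := by
    intro j hj h
    refine (mem_support_iff.mp hj) (hφ ?_)
    rw [map_zero]
    exact h
  set p : ℕ → E := fun i => ∑ j ∈ S, a j * β j ^ i with hp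
  have heval : ∀ i : ℕ, p i = cE.eval (α ^ i) := by
    intro i
    rw [eval_eq_sum, sum_def, hsupp]
    refine Finset.sum_congr rfl fun j hj => ?_
    rw [hcE, coeff_map]
    congr 1
    rw [hβ, ← pow_mul, ← pow_mul, mul_comm]
  have hp0 : ∀ i ∈ ({0, 1, 3, 4, 6} : Finset ℕ), p i = 0 := fun i hi => by
    rw [heval i]; exact hzero i hi
  have hp00 : p 0 = 0 := hp0 0 (by decide)
  have hp01 : p 1 = 0 := hp0 1 (by decide)
  have hp03 : p 3 = 0 := hp0 3 (by decide)
  have hp04 : p 4 = 0 := hp0 4 (by decide)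
  have hp06 : p 6 = 0 := hp0 6 (by decide)
  have hSne : S.Nonempty := Polynomial.support_nonempty.mpr hc
  obtain ⟨k0, hk0⟩ := hSne
  -- case split on the cardinality of the support
  rcases Nat.lt_or_ge S.card 4 with hcard | hcard
  · -- small case: exponents 0, 3, 6 give a Vandermonde on the cubes
    have hinj3 : Set.InjOn (fun j => β j ^ 3) S := by
      intro j hj k hk h
      exact hβinj hj hk (hcube _ _ (hβn j) (hβn k) h)
    have H : ∀ m < 3, ∑ j ∈ S, a j * (β j ^ 3) ^ m = 0 := by
      intro m hm
      have : ∑ j ∈ S, a j * (β j ^ 3) ^ m = p (3 * m) := by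
        refine Finset.sum_congr rfl fun j _ => ?_
        rw [← pow_mul, mul_comm 3 m]
      rw [this]
      interval_cases m
      · exact hp00
      · exact hp03
      · exact hp06
    exact haj k0 hk0 (lagrange_kill S a _ hinj3 3 (by omega) H k0 hk0)
  · have hcard4 : S.card = 4 := by omega
    -- p 2 ≠ 0
    have hp2 : p 2 ≠ 0 := by
      intro h
      have H : ∀ m < 4, ∑ j ∈ S, a j * β j ^ m = 0 := by
        intro m hm
        interval_cases m
        · exact hp00
        · exact hp01
        · exact h
        · exact hp03
      exact haj k0 hk0 (lagrange_kill S a β hβinj 4 (by omega) H k0 hk0)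
    set P : Polynomial E := ∏ j ∈ S, (X - C (β j)) with hP
    have hPmonic : P.Monic := monic_prod_of_monic _ _ fun j _ => monic_X_sub_C _
    have hPdeg : P.natDegree = 4 := by
      rw [hP, natDegree_prod_of_monic _ _ (fun j _ => monic_X_sub_C _)]
      simp [natDegree_X_sub_C, hcard4]
    have hq4 : P.coeff 4 = 1 := by
      have := hPmonic.coeff_natDegree
      rwa [hPdeg] at this
    have hPeval : ∀ j ∈ S, P.eval (β j) = 0 := by
      intro j hj
      rw [hP, eval_prod]
      exact Finset.prod_eq_zero hj (by simp)
    have hkey : ∀ i : ℕ, ∑ m ∈ range 5, P.coeff m * p (i + m) = 0 := by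
      intro i
      have h1 : (0 : E) = ∑ j ∈ S, a j * β j ^ i * P.eval (β j) :=
        (Finset.sum_eq_zero fun j hj => by rw [hPeval j hj, mul_zero]).symm
      rw [show (5 : ℕ) = P.natDegree + 1 by omega]
      calc ∑ m ∈ range (P.natDegree + 1), P.coeff m * p (i + m)
          = ∑ m ∈ range (P.natDegree + 1), ∑ j ∈ S, P.coeff m * (a j * β j ^ (i + m)) := by
            simp [hp, Finset.mul_sum]
        _ = ∑ j ∈ S, ∑ m ∈ range (P.natDegree + 1), P.coeff m * (a j * β j ^ (i + m)) :=
            Finset.sum_comm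
        _ = ∑ j ∈ S, a j * β j ^ i * P.eval (β j) := by
            refine Finset.sum_congr rfl fun j hj => ?_
            rw [eval_eq_sum_range, Finset.mul_sum]
            exact Finset.sum_congr rfl fun m _ => by rw [pow_add]; ring
        _ = 0 := h1.symm
    have e0 := hkey 0
    have e1 := hkey 1
    have e2 := hkey 2
    simp only [Finset.sum_range_succ, Finset.sum_range_zero, zero_add] at e0 e1 e2
    norm_num [hp00, hp01, hp03, hp04, hp06, hq4] at e0 e1 e2
    -- e0 : P.coeff 2 * p 2 = 0, etc.
    have hq2 : P.coeff 2 = 0 := e0.resolve_right hp2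
    have hq0 : P.coeff 0 = P.coeff 3 * P.coeff 1 := by
      have h : (P.coeff 0 - P.coeff 3 * P.coeff 1) * p 2 = 0 := by
        linear_combination e2 - P.coeff 3 * e1
      exact sub_eq_zero.mp ((mul_eq_zero.mp h).resolve_right hp2)
    have hfact : P = (X + C (P.coeff 3)) * (X ^ 3 + C (P.coeff 1)) := by
      have h5 : P.natDegree < 5 := by omega
      conv_lhs => rw [P.as_sum_range' 5 h5]
      simp only [Finset.sum_range_succ, Finset.sum_range_zero, zero_add,
        ← C_mul_X_pow_eq_monomial, hq2, hq4, hq0, map_mul, map_one, map_zero]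
      ring
    have hroots : ∀ j ∈ S, β j = -P.coeff 3 ∨ β j ^ 3 = -P.coeff 1 := by
      intro j hj
      have h := hPeval j hj
      rw [hfact] at h
      simp only [eval_mul, eval_add, eval_X, eval_pow, eval_C] at h
      rcases mul_eq_zero.mp h with h | h
      · exact Or.inl (eq_neg_of_add_eq_zero_left h)
      · exact Or.inr (eq_neg_of_add_eq_zero_left h)
    classical
    set T := S.filter (fun j => β j ^ 3 = -P.coeff 1) with hT
    have hTcard : 2 ≤ T.card := by
      by_contra hTc
      push_neg at hTc
      have hone : (S \ T).card ≤ 1 := by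
        refine Finset.card_le_one.mpr fun j hj k hk => ?_
        have hj' := Finset.mem_sdiff.mp hj
        have hk' := Finset.mem_sdiff.mp hk
        have hbj : β j = -P.coeff 3 := (hroots j hj'.1).resolve_right
          (fun h => hj'.2 (Finset.mem_filter.mpr ⟨hj'.1, h⟩))
        have hbk : β k = -P.coeff 3 := (hroots k hk'.1).resolve_right
          (fun h => hk'.2 (Finset.mem_filter.mpr ⟨hk'.1, h⟩))
        exact hβinj hj'.1 hk'.1 (hbj.trans hbk.symm)
      have hsd : (S \ T).card = S.card - T.card :=
        Finset.card_sdiff_of_subset (Finset.filter_subset _ _)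
      omega
    obtain ⟨j, hj, k, hk, hjk⟩ := Finset.one_lt_card.mp hTcard
    have hj' := Finset.mem_filter.mp hj
    have hk' := Finset.mem_filter.mp hk
    exact hjk (hβinj hj'.1 hk'.1 (hcube _ _ (hβn j) (hβn k) (hj'.2.trans hk'.2.symm)))
end

section
/- (Boston's bound 6 via rational functions.) Let F be a finite field and E an extension field of F, let n be an odd positive integer, and let α ∈ E have multiplicative order exactly n. If c ∈ F[X] is nonzero with deg c < n and c(α^i) = 0 for all i ∈ {0, 1, 2, 4, 5, 6, 8}, then the Hamming weight of c is at least 6. -/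
open Polynomial
open Finset

/-- Boston's bound 6 via rational functions: if `n` is odd and the codeword
`c` vanishes at `α^i` for `i ∈ {0, 1, 2, 4, 5, 6, 8}`, then `wt(c) ≥ 6`. -/
theorem boston_bound_six
    (F E : Type*) [Field F] [Fintype F] [Field E] [Algebra F E]
    (n : ℕ) (hn : 0 < n) (hodd : Odd n)
    (α : E) (hα : orderOf α = n)
    (c : Polynomial F) (hc : c ≠ 0) (hcdeg : c.natDegree < n)
    (hzero : ∀ i ∈ ({0, 1, 2, 4, 5, 6, 8} : Finset ℕ),
      (c.map (algebraMap F E)).eval (α ^ i) = 0) :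
    6 ≤ c.support.card := by
  classical
  by_contra hcard
  push_neg at hcard
  have hw5 : c.support.card ≤ 5 := by omega
  set S := c.support with hS
  set φ := algebraMap F E with hφdef
  have hφ : Function.Injective φ := (algebraMap F E).injective
  -- basic facts about α
  have hα1 : α ^ n = 1 := by rw [← hα]; exact pow_orderOf_eq_one α
  have hαne : α ≠ 0 := by
    intro h
    rw [h, zero_pow hn.ne'] at hα1
    exact one_ne_zero hα1.symm
  set u : Eˣ := Units.mk0 α hαne with hu_def
  have hu : orderOf u = n := by
    rw [← orderOf_units, Units.val_mk0]; exact hα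
  have hmodeq : ∀ s t : ℕ, α ^ s = α ^ t → s ≡ t [MOD n] := by
    intro s t h
    have h' : u ^ s = u ^ t := by
      apply Units.ext
      rw [Units.val_pow_eq_pow_val, Units.val_pow_eq_pow_val, Units.val_mk0]
      exact h
    simpa [hu] using pow_eq_pow_iff_modEq.mp h'
  have hcop : Nat.gcd n 4 = 1 := by
    have h2 : Nat.Coprime n 2 := Nat.coprime_two_right.mpr hodd
    have : Nat.Coprime n 4 := by
      have := Nat.Coprime.mul_right h2 h2
      norm_num at this
      exact this
    exact this
  have hexp : ∀ s t : ℕ, s < n → t < n → α ^ s = α ^ t → s = t := by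
    intro s t hs ht h
    have := hmodeq s t h
    unfold Nat.ModEq at this
    rwa [Nat.mod_eq_of_lt hs, Nat.mod_eq_of_lt ht] at this
  have hexp4 : ∀ s t : ℕ, s < n → t < n → α ^ (4 * s) = α ^ (4 * t) → s = t := by
    intro s t hs ht h
    have h1 := hmodeq _ _ h
    have h2 := Nat.ModEq.cancel_left_of_coprime hcop h1
    unfold Nat.ModEq at h2
    rwa [Nat.mod_eq_of_lt hs, Nat.mod_eq_of_lt ht] at h2
  -- coefficients and roots
  set a : ℕ → E := fun j => φ (c.coeff j) with hadef
  set β : ℕ → E := fun j => α ^ j with hβdef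
  have hjn : ∀ j ∈ S, j < n := fun j hj =>
    lt_of_le_of_lt (le_natDegree_of_mem_supp j hj) hcdeg
  have haj : ∀ j ∈ S, a j ≠ 0 := by
    intro j hj
    have := mem_support_iff.mp hj
    simp only [hadef]
    exact fun h => this (hφ (by simpa using h))
  have hβne : ∀ j, β j ≠ 0 := fun j => pow_ne_zero _ hαne
  have hβinj : ∀ j ∈ S, ∀ k ∈ S, β j = β k → j = k := by
    intro j hj k hk h
    exact hexp j k (hjn j hj) (hjn k hk) h
  have hβ4inj : ∀ j ∈ S, ∀ k ∈ S, β j ^ 4 = β k ^ 4 → j = k := by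
    intro j hj k hk h
    apply hexp4 j k (hjn j hj) (hjn k hk)
    rw [Nat.mul_comm 4 j, Nat.mul_comm 4 k, pow_mul, pow_mul]
    exact h
  -- power sums
  set p : ℕ → E := fun i => ∑ j ∈ S, a j * β j ^ i with hpdef
  have hpI : ∀ i ∈ ({0, 1, 2, 4, 5, 6, 8} : Finset ℕ), p i = 0 := by
    intro i hi
    have h := hzero i hi
    rw [eval_map, eval₂_eq_sum, Polynomial.sum_def] at h
    rw [hpdef]
    calc ∑ j ∈ S, a j * β j ^ i
        = ∑ j ∈ S, φ (c.coeff j) * (α ^ i) ^ j := by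
          refine sum_congr rfl fun j _ => ?_
          show φ (c.coeff j) * (α ^ j) ^ i = φ (c.coeff j) * (α ^ i) ^ j
          rw [← pow_mul, ← pow_mul, Nat.mul_comm]
      _ = 0 := h
  have hp0 : p 0 = 0 := hpI 0 (by decide)
  have hp1 : p 1 = 0 := hpI 1 (by decide)
  have hp2 : p 2 = 0 := hpI 2 (by decide)
  have hp4 : p 4 = 0 := hpI 4 (by decide)
  have hp5 : p 5 = 0 := hpI 5 (by decide)
  have hp6 : p 6 = 0 := hpI 6 (by decide)
  have hp8 : p 8 = 0 := hpI 8 (by decide)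
  -- swap lemma
  have swap : ∀ (Q : E[X]) (k d : ℕ), Q.natDegree < d →
      ∑ l ∈ range d, Q.coeff l * p (k + l)
        = ∑ j ∈ S, a j * β j ^ k * Q.eval (β j) := by
    intro Q k d hd
    calc ∑ l ∈ range d, Q.coeff l * p (k + l)
        = ∑ l ∈ range d, ∑ j ∈ S, Q.coeff l * (a j * (β j ^ k * β j ^ l)) := by
          apply sum_congr rfl
          intro l _
          rw [hpdef]
          simp only []
          rw [mul_sum]
          apply sum_congr rfl
          intro j _
          rw [pow_add]
      _ = ∑ j ∈ S, ∑ l ∈ range d, Q.coeff l * (a j * (β j ^ k * β j ^ l)) :=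
          sum_comm
      _ = ∑ j ∈ S, a j * β j ^ k * Q.eval (β j) := by
          apply sum_congr rfl
          intro j _
          rw [eval_eq_sum_range' hd, mul_sum]
          apply sum_congr rfl
          intro l _
          ring
  -- the annihilator polynomial
  set m : E[X] := ∏ j ∈ S, (X - C (β j)) with hmdef
  have hmMonic : m.Monic := monic_prod_of_monic _ _ fun j _ => monic_X_sub_C (β j)
  have hmdeg : m.natDegree = S.card := by
    rw [hmdef, natDegree_prod _ _ fun j _ => X_sub_C_ne_zero (β j)]
    simp [natDegree_X_sub_C]
  have hmroot : ∀ j ∈ S, m.eval (β j) = 0 := by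
    intro j hj
    rw [hmdef, eval_prod]
    exact prod_eq_zero hj (by simp)
  have key : ∀ k, ∑ l ∈ range (S.card + 1), m.coeff l * p (k + l) = 0 := by
    intro k
    rw [swap m k _ (by rw [hmdeg]; omega)]
    apply sum_eq_zero
    intro j hj
    rw [hmroot j hj, mul_zero]
  -- window lemma
  obtain ⟨j0, hj0⟩ := Polynomial.support_nonempty.mpr hc
  have hw1 : 1 ≤ S.card := card_pos.mpr ⟨j0, hj0⟩
  have window : ¬ (∀ l ∈ range S.card, p l = 0) := by
    intro h
    set L : E[X] := ∏ j ∈ S.erase j0, (X - C (β j)) with hLdef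
    have hLdeg : L.natDegree = S.card - 1 := by
      rw [hLdef, natDegree_prod _ _ fun j _ => X_sub_C_ne_zero (β j)]
      simp [natDegree_X_sub_C, card_erase_of_mem hj0]
      exact card_erase_of_mem hj0
    have hLlt : L.natDegree < S.card := by omega
    have h0 : ∑ l ∈ range S.card, L.coeff l * p (0 + l) = 0 := by
      apply sum_eq_zero
      intro l hl
      rw [zero_add, h l hl, mul_zero]
    rw [swap L 0 S.card hLlt] at h0
    rw [Finset.sum_eq_single_of_mem j0 hj0] at h0
    · have hLne : L.eval (β j0) ≠ 0 := by
        rw [hLdef, eval_prod]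
        rw [prod_ne_zero_iff]
        intro j hj
        simp only [eval_sub, eval_X, eval_C]
        intro heq
        have : β j0 = β j := sub_eq_zero.mp heq
        exact (mem_erase.mp hj).1 (hβinj j (mem_erase.mp hj).2 j0 hj0 this.symm)
      have := haj j0 hj0
      simp only [pow_zero, mul_one] at h0
      rcases mul_eq_zero.mp h0 with h' | h'
      · exact this h'
      · exact hLne h'
    · intro b hb hbne
      have : L.eval (β b) = 0 := by
        rw [hLdef, eval_prod]
        exact prod_eq_zero (mem_erase.mpr ⟨hbne, hb⟩) (by simp)
      rw [this, mul_zero]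
  -- case analysis on the weight
  rcases Nat.lt_or_ge S.card 4 with hwle | hwge
  · -- weight ≤ 3
    apply window
    intro l hl
    rw [mem_range] at hl
    have : l < 3 := by omega
    interval_cases l
    · exact hp0
    · exact hp1
    · exact hp2
  rcases Nat.lt_or_ge S.card 5 with hw4' | hwge5
  · -- weight = 4
    have hw4 : S.card = 4 := by omega
    have hp3 : p 3 ≠ 0 := by
      intro hp3
      apply window
      intro l hl
      rw [mem_range, hw4] at hl
      interval_cases l
      · exact hp0
      · exact hp1
      · exact hp2
      · exact hp3
    have hr4 : m.coeff 4 = 1 := by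
      have := hmMonic.coeff_natDegree
      rwa [hmdeg, hw4] at this
    have k0 := key 0
    have k1 := key 1
    have k2 := key 2
    rw [hw4] at k0 k1 k2
    simp only [sum_range_succ, sum_range_zero, zero_add, Nat.reduceAdd,
      hp0, hp1, hp2, hp4, hp5, hp6, hr4, mul_zero, add_zero, one_mul] at k0 k1 k2
    -- k0 : m.coeff 3 * p 3 = 0, k1 : m.coeff 2 * p 3 = 0, k2 : m.coeff 1 * p 3 = 0
    have hm3 : m.coeff 3 = 0 := by
      rcases mul_eq_zero.mp k0 with h | h
      · exact h
      · exact absurd h hp3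
    have hm2 : m.coeff 2 = 0 := by
      rcases mul_eq_zero.mp k1 with h | h
      · exact h
      · exact absurd h hp3
    have hm1 : m.coeff 1 = 0 := by
      rcases mul_eq_zero.mp k2 with h | h
      · exact h
      · exact absurd h hp3
    have hval : ∀ j ∈ S, β j ^ 4 = - m.coeff 0 := by
      intro j hj
      have h := hmroot j hj
      rw [eval_eq_sum_range' (show m.natDegree < 5 by omega)] at h
      simp only [sum_range_succ, sum_range_zero, zero_add,
        hm1, hm2, hm3, hr4, zero_mul, add_zero, one_mul, mul_one, pow_zero] at h
      linear_combination h
    obtain ⟨j1, hj1, j2, hj2, hne⟩ := Finset.one_lt_card.mp (by omega : 1 < S.card)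
    apply hne
    apply hβ4inj j1 hj1 j2 hj2
    rw [hval j1 hj1, hval j2 hj2]
  · -- weight = 5
    have hw5' : S.card = 5 := by omega
    have hp3 : p 3 ≠ 0 := by
      intro hp3
      apply window
      intro l hl
      rw [mem_range, hw5'] at hl
      interval_cases l
      · exact hp0
      · exact hp1
      · exact hp2
      · exact hp3
      · exact hp4
    have hr5 : m.coeff 5 = 1 := by
      have := hmMonic.coeff_natDegree
      rwa [hmdeg, hw5'] at this
    have hr0ne : m.coeff 0 ≠ 0 := by
      rw [coeff_zero_eq_eval_zero, hmdef, eval_prod, prod_ne_zero_iff]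
      intro j hj
      simp only [eval_sub, eval_X, eval_C, zero_sub]
      exact neg_ne_zero.mpr (hβne j)
    have k0 := key 0
    have k1 := key 1
    have k2 := key 2
    have k3 := key 3
    rw [hw5'] at k0 k1 k2 k3
    simp only [sum_range_succ, sum_range_zero, zero_add, Nat.reduceAdd,
      hp0, hp1, hp2, hp4, hp5, hp6, hp8, hr5, mul_zero, add_zero, zero_add, one_mul] at k0 k1 k2 k3
    -- k0 : m.coeff 3 * p 3 = 0
    -- k1 : m.coeff 2 * p 3 = 0
    -- k2 : m.coeff 1 * p 3 + p 7 = 0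
    -- k3 : m.coeff 0 * p 3 + m.coeff 4 * p 7 = 0
    have hm3 : m.coeff 3 = 0 := by
      rcases mul_eq_zero.mp k0 with h | h
      · exact h
      · exact absurd h hp3
    have hm2 : m.coeff 2 = 0 := by
      rcases mul_eq_zero.mp k1 with h | h
      · exact h
      · exact absurd h hp3
    have hp7 : p 7 = - m.coeff 1 * p 3 := by linear_combination k2
    have hm0 : m.coeff 0 = m.coeff 4 * m.coeff 1 := by
      rw [hp7] at k3
      have : (m.coeff 0 - m.coeff 4 * m.coeff 1) * p 3 = 0 := by linear_combination k3
      rcases mul_eq_zero.mp this with h | h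
      · linear_combination h
      · exact absurd h hp3
    have hr1ne : m.coeff 1 ≠ 0 := by
      intro h
      rw [hm0, h, mul_zero] at hr0ne
      exact hr0ne rfl
    have hval : ∀ j ∈ S, (β j + m.coeff 4) * (β j ^ 4 + m.coeff 1) = 0 := by
      intro j hj
      have h := hmroot j hj
      rw [eval_eq_sum_range' (show m.natDegree < 6 by omega)] at h
      simp only [sum_range_succ, sum_range_zero, zero_add,
        hm2, hm3, hr5, hm0, zero_mul, add_zero, one_mul, mul_one, pow_zero] at h
      linear_combination h
    have hT1 : (S.filter (fun j => β j = - m.coeff 4)).card ≤ 1 := by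
      rw [Finset.card_le_one]
      intro x hx y hy
      rw [mem_filter] at hx hy
      exact hβinj x hx.1 y hy.1 (by rw [hx.2, hy.2])
    have hsplit := Finset.card_filter_add_card_filter_not
      (s := S) (p := fun j => β j = - m.coeff 4)
    have hT2 : 1 < (S.filter (fun a => ¬ β a = - m.coeff 4)).card := by omega
    obtain ⟨j1, hj1, j2, hj2, hne⟩ := Finset.one_lt_card.mp hT2
    rw [mem_filter] at hj1 hj2
    apply hne
    apply hβ4inj j1 hj1.1 j2 hj2.1
    have h1 : β j1 ^ 4 = - m.coeff 1 := by
      rcases mul_eq_zero.mp (hval j1 hj1.1) with h | h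
      · exact absurd (by linear_combination h) hj1.2
      · linear_combination h
    have h2 : β j2 ^ 4 = - m.coeff 1 := by
      rcases mul_eq_zero.mp (hval j2 hj2.1) with h | h
      · exact absurd (by linear_combination h) hj2.2
      · linear_combination h
    rw [h1, h2]
end

section
/- (Boston's bound 7 via rational functions.) Let F be a finite field and E an extension field of F, let n be a positive integer with gcd(n, 3) = 1, and let α ∈ E have multiplicative order exactly n. If c ∈ F[X] is nonzero with deg c < n and c(α^i) = 0 for all i ∈ {0, 1, 3, 4, 6, 7}, then the Hamming weight of c is at least 6. -/
open Polynomial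

private def lam (i : ℤ) : ℤ := if i % 3 = 0 then 0 else if i % 3 = 1 then 1 else -1

private lemma lam_sum3 (i : ℤ) : lam (i+1) + lam (i+2) + lam (i+3) = 0 := by
  unfold lam; split_ifs <;> omega

private lemma lam_period (i : ℤ) : lam (i+3) = lam i := by
  unfold lam
  have : (i+3) % 3 = i % 3 := by omega
  rw [this]

/-- The basic exponential-sum-times-`lam` sequence. -/
private def SS {E : Type*} [Field E] (α : E) (g₁ g₂ : ℕ → E) (t : Finset ℕ) (i : ℤ) : E :=
  ∑ e ∈ t, (α ^ e) ^ i * (g₁ e * ((lam (i+1) : ℤ) : E) + g₂ e * ((lam (i+2) : ℤ) : E))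

private def G1 {E : Type*} [Field E] (α : E) (e : ℕ) (g₁ g₂ : ℕ → E) : ℕ → E :=
  fun e' => (α^e')^2 * (g₂ e' - g₁ e') - α^e * α^e' * g₂ e' + (α^e)^2 * g₁ e'

private def G2 {E : Type*} [Field E] (α : E) (e : ℕ) (g₁ g₂ : ℕ → E) : ℕ → E :=
  fun e' => -((α^e')^2) * g₁ e' + α^e * α^e' * (g₁ e' - g₂ e') + (α^e)^2 * g₂ e'

private lemma SS_step {E : Type*} [Field E] (α : E) (hα : α ≠ 0) (g₁ g₂ : ℕ → E)
    (e : ℕ) (t' : Finset ℕ) (he : e ∉ t') (i : ℤ) :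
    SS α (G1 α e g₁ g₂) (G2 α e g₁ g₂) t' i
      = SS α g₁ g₂ (insert e t') (i+2) + α^e * SS α g₁ g₂ (insert e t') (i+1)
        + (α^e)^2 * SS α g₁ g₂ (insert e t') i := by
  have hz : ∀ e' : ℕ, (α^e' : E) ≠ 0 := fun e' => pow_ne_zero _ hα
  have hz1 : ∀ e' : ℕ, ((α^e' : E)) ^ (i+1) = (α^e')^i * α^e' :=
    fun e' => zpow_add_one₀ (hz e') i
  have hz2 : ∀ e' : ℕ, ((α^e' : E)) ^ (i+2) = (α^e')^i * (α^e' * α^e') := by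
    intro e'
    rw [show i+2 = i+1+1 by ring, zpow_add_one₀ (hz e'), zpow_add_one₀ (hz e'), mul_assoc]
  have e3 : ((lam (i+3) : ℤ) : E) = -((lam (i+1) : ℤ) : E) - ((lam (i+2) : ℤ) : E) := by
    have h := lam_sum3 i
    have h2 : lam (i+3) = -lam (i+1) - lam (i+2) := by omega
    rw [h2]; push_cast; ring
  have e4 : ((lam (i+4) : ℤ) : E) = ((lam (i+1) : ℤ) : E) := by
    rw [show i+4 = (i+1)+3 by ring, lam_period]
  have hE : (α^e : E)^(i+2) * (g₁ e * ((lam (i+2+1) : ℤ) : E) + g₂ e * ((lam (i+2+2) : ℤ) : E))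
      + α^e * ((α^e : E)^(i+1) * (g₁ e * ((lam (i+1+1) : ℤ) : E) + g₂ e * ((lam (i+1+2) : ℤ) : E)))
      + (α^e)^2 * ((α^e : E)^i * (g₁ e * ((lam (i+1) : ℤ) : E) + g₂ e * ((lam (i+2) : ℤ) : E))) = 0 := by
    rw [show i+2+1 = i+3 by ring, show i+2+2 = i+4 by ring, show i+1+1 = i+2 by ring,
        show i+1+2 = i+3 by ring, hz2 e, hz1 e, e3, e4]
    ring
  have hbody : ∀ x ∈ t',
      (α^x : E)^i * (G1 α e g₁ g₂ x * ((lam (i+1) : ℤ) : E) + G2 α e g₁ g₂ x * ((lam (i+2) : ℤ) : E))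
      = (α^x : E)^(i+2) * (g₁ x * ((lam (i+2+1) : ℤ) : E) + g₂ x * ((lam (i+2+2) : ℤ) : E))
        + α^e * ((α^x : E)^(i+1) * (g₁ x * ((lam (i+1+1) : ℤ) : E) + g₂ x * ((lam (i+1+2) : ℤ) : E)))
        + (α^e)^2 * ((α^x : E)^i * (g₁ x * ((lam (i+1) : ℤ) : E) + g₂ x * ((lam (i+2) : ℤ) : E))) := by
    intro x _
    rw [show i+2+1 = i+3 by ring, show i+2+2 = i+4 by ring, show i+1+1 = i+2 by ring,
        show i+1+2 = i+3 by ring, hz2 x, hz1 x, e3, e4]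
    simp only [G1, G2]
    ring
  calc SS α (G1 α e g₁ g₂) (G2 α e g₁ g₂) t' i
      = ∑ x ∈ t',
          ((α^x : E)^(i+2) * (g₁ x * ((lam (i+2+1) : ℤ) : E) + g₂ x * ((lam (i+2+2) : ℤ) : E))
          + α^e * ((α^x : E)^(i+1) * (g₁ x * ((lam (i+1+1) : ℤ) : E) + g₂ x * ((lam (i+1+2) : ℤ) : E)))
          + (α^e)^2 * ((α^x : E)^i * (g₁ x * ((lam (i+1) : ℤ) : E) + g₂ x * ((lam (i+2) : ℤ) : E)))) := by
        simp only [SS]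
        exact Finset.sum_congr rfl hbody
    _ = (∑ x ∈ t', (α^x : E)^(i+2) * (g₁ x * ((lam (i+2+1) : ℤ) : E) + g₂ x * ((lam (i+2+2) : ℤ) : E)))
        + α^e * (∑ x ∈ t', (α^x : E)^(i+1) * (g₁ x * ((lam (i+1+1) : ℤ) : E) + g₂ x * ((lam (i+1+2) : ℤ) : E)))
        + (α^e)^2 * (∑ x ∈ t', (α^x : E)^i * (g₁ x * ((lam (i+1) : ℤ) : E) + g₂ x * ((lam (i+2) : ℤ) : E))) := by
        rw [Finset.sum_add_distrib, Finset.sum_add_distrib, ← Finset.mul_sum, ← Finset.mul_sum]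
    _ = SS α g₁ g₂ (insert e t') (i+2) + α^e * SS α g₁ g₂ (insert e t') (i+1)
        + (α^e)^2 * SS α g₁ g₂ (insert e t') i := by
        simp only [SS, Finset.sum_insert he]
        linear_combination -hE

private lemma key {E : Type*} [Field E] (α : E) (hα : α ≠ 0) (t : Finset ℕ) :
    ∀ (g₁ g₂ : ℕ → E) (m : ℤ),
      (∀ i : ℤ, m ≤ i → i < m + 2 * (t.card : ℤ) → SS α g₁ g₂ t i = 0) →
      ∀ i : ℤ, m ≤ i → SS α g₁ g₂ t i = 0 := by
  induction t using Finset.induction_on with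
  | empty => intro g₁ g₂ m _ i _; simp [SS]
  | @insert e t' he ih =>
    intro g₁ g₂ m H i hi
    have hc2 : ((insert e t').card : ℤ) = (t'.card : ℤ) + 1 := by
      rw [Finset.card_insert_of_notMem he]; push_cast; ring
    have hv : ∀ j : ℤ, m ≤ j → SS α (G1 α e g₁ g₂) (G2 α e g₁ g₂) t' j = 0 := by
      refine ih (G1 α e g₁ g₂) (G2 α e g₁ g₂) m ?_
      intro j hj1 hj2
      rw [SS_step α hα g₁ g₂ e t' he j,
          H (j+2) (by omega) (by omega), H (j+1) (by omega) (by omega),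
          H j (by omega) (by omega)]
      ring
    have hrec : ∀ j : ℤ, m ≤ j → SS α g₁ g₂ (insert e t') (j+2)
        = -(α^e * SS α g₁ g₂ (insert e t') (j+1)) - (α^e)^2 * SS α g₁ g₂ (insert e t') j := by
      intro j hj
      have h1 := hv j hj
      rw [SS_step α hα g₁ g₂ e t' he j] at h1
      linear_combination h1
    have main : ∀ k : ℕ, SS α g₁ g₂ (insert e t') (m + k) = 0 := by
      intro k
      induction k using Nat.strong_induction_on with
      | _ k ihk =>
        rcases Nat.lt_or_ge k 2 with hk | hk
        · exact H (m + k) (by omega) (by omega)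
        · obtain ⟨k', rfl⟩ : ∃ k', k = k' + 2 := ⟨k - 2, by omega⟩
          have h0 := ihk k' (by omega)
          have h1 := ihk (k' + 1) (by omega)
          have h2 := hrec (m + (k' : ℤ)) (by omega)
          rw [show m + ((k' + 2 : ℕ) : ℤ) = (m + (k' : ℤ)) + 2 by push_cast; ring, h2,
              show m + (k' : ℤ) + 1 = m + ((k' + 1 : ℕ) : ℤ) by push_cast; ring, h1, h0]
          ring
    have : i = m + ((i - m).toNat : ℤ) := by omega
    rw [this]
    exact main _

/-- Boston's bound 7 via rational functions: if `gcd(n, 3) = 1` and the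
codeword `c` vanishes at `α^i` for `i ∈ {0, 1, 3, 4, 6, 7}`, then `wt(c) ≥ 6`. -/
theorem boston_bound_seven
    (F E : Type*) [Field F] [Fintype F] [Field E] [Algebra F E]
    (n : ℕ) (hn : 0 < n) (hn3 : Nat.gcd n 3 = 1)
    (α : E) (hα : orderOf α = n)
    (c : Polynomial F) (hc : c ≠ 0) (hcdeg : c.natDegree < n)
    (hzero : ∀ i ∈ ({0, 1, 3, 4, 6, 7} : Finset ℕ),
      (c.map (algebraMap F E)).eval (α ^ i) = 0) :
    6 ≤ c.support.card := by
  classical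
  by_contra hlt
  push_neg at hlt
  have hw5 : c.support.card ≤ 5 := by omega
  set φ := algebraMap F E with hφdef
  have hφ : Function.Injective φ := (algebraMap F E).injective
  have hα1 : α ^ n = 1 := by rw [← hα]; exact pow_orderOf_eq_one α
  have hα0 : α ≠ 0 := by
    rintro rfl
    rw [zero_pow hn.ne'] at hα1
    exact zero_ne_one hα1
  have hmapne : c.map φ ≠ 0 := fun h => hc ((Polynomial.map_eq_zero_iff hφ).mp h)
  have hS_eval : ∀ i : ℤ, 0 ≤ i →
      SS α (fun e => φ (c.coeff e)) (fun _ => 0) c.support i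
        = (c.map φ).eval (α ^ i.toNat) * ((lam (i+1) : ℤ) : E) := by
    intro i hi
    rw [Polynomial.eval_map, Polynomial.eval₂_eq_sum, Polynomial.sum_def, Finset.sum_mul]
    simp only [SS]
    refine Finset.sum_congr rfl fun e he => ?_
    have h1 : ((α ^ e : E)) ^ i = (α ^ i.toNat) ^ e := by
      conv_lhs => rw [show i = ((i.toNat : ℕ) : ℤ) by omega]
      rw [zpow_natCast, ← pow_mul, mul_comm, pow_mul]
    rw [h1]; ring
  have H : ∀ i : ℤ, -1 ≤ i → i < -1 + 2 * (c.support.card : ℤ) →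
      SS α (fun e => φ (c.coeff e)) (fun _ => 0) c.support i = 0 := by
    intro i h1 h2
    have hcc : (c.support.card : ℤ) ≤ 5 := by exact_mod_cast hw5
    by_cases h3 : (i+1) % 3 = 0
    · have hl : lam (i+1) = 0 := by unfold lam; rw [if_pos h3]
      simp [SS, hl]
    · have hi9 : i = 0 ∨ i = 1 ∨ i = 3 ∨ i = 4 ∨ i = 6 ∨ i = 7 := by omega
      have h0 : (0:ℤ) ≤ i := by omega
      rw [hS_eval i h0]
      have hz : (c.map φ).eval (α ^ i.toNat) = 0 := by
        apply hzero
        rcases hi9 with rfl|rfl|rfl|rfl|rfl|rfl <;> decide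
      rw [hz, zero_mul]
  have hall := key α hα0 c.support (fun e => φ (c.coeff e)) (fun _ => 0) (-1) H
  have heval : ∀ r : ℕ, (c.map φ).eval (α ^ r) = 0 := by
    intro r
    have hn3' : ¬ (3 ∣ n) := by
      intro h
      have h3 : 3 ∣ Nat.gcd n 3 := Nat.dvd_gcd h dvd_rfl
      rw [hn3] at h3
      omega
    have hpick : ∀ j : ℕ, (r + j*n + 1) % 3 ≠ 0 → (c.map φ).eval (α ^ r) = 0 := by
      intro j hj
      have h1 := hall ((r + j*n : ℕ) : ℤ) (by omega)
      rw [hS_eval _ (by omega)] at h1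
      have htoNat : (((r + j*n : ℕ) : ℤ)).toNat = r + j*n := by omega
      rw [htoNat] at h1
      have hvals : lam (((r + j*n : ℕ) : ℤ) + 1) = 1 ∨ lam (((r + j*n : ℕ) : ℤ) + 1) = -1 := by
        unfold lam; split_ifs <;> omega
      have hlam : ((lam (((r + j*n : ℕ) : ℤ) + 1) : ℤ) : E) ≠ 0 := by
        rcases hvals with hv | hv <;> rw [hv] <;> simp
      rcases mul_eq_zero.mp h1 with h | h
      · rw [pow_add, mul_comm j n, pow_mul, hα1, one_pow, mul_one] at h
        exact h
      · exact absurd h hlam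
    have hnm : n % 3 = 1 ∨ n % 3 = 2 := by omega
    by_cases h0 : (r + 0*n + 1) % 3 = 0
    · by_cases h1 : (r + 1*n + 1) % 3 = 0
      · exact hpick 2 (by omega)
      · exact hpick 1 h1
    · exact hpick 0 h0
  have haux : ∀ r s : ℕ, r ≤ s → s < n → α ^ r = α ^ s → r = s := by
    intro r s hrs hs h
    have h2 : α ^ r * α ^ (s - r) = α ^ r * 1 := by
      rw [mul_one, ← pow_add, Nat.add_sub_cancel' hrs, ← h]
    have h3 : α ^ (s - r) = 1 := mul_left_cancel₀ (pow_ne_zero r hα0) h2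
    have h4 : n ∣ s - r := hα ▸ orderOf_dvd_of_pow_eq_one h3
    by_cases h5 : s - r = 0
    · omega
    · have := Nat.le_of_dvd (Nat.pos_of_ne_zero h5) h4
      omega
  have hroots : (Finset.range n).image (α ^ ·) ⊆ (c.map φ).roots.toFinset := by
    intro x hx
    simp only [Finset.mem_image, Finset.mem_range] at hx
    obtain ⟨r, hr, rfl⟩ := hx
    rw [Multiset.mem_toFinset, Polynomial.mem_roots']
    exact ⟨hmapne, heval r⟩
  have hcard1 : n ≤ ((c.map φ).roots.toFinset).card := by
    have himg : ((Finset.range n).image (α ^ ·)).card = n := by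
      rw [Finset.card_image_of_injOn, Finset.card_range]
      intro r hr s hs h
      simp only [Finset.coe_range, Set.mem_Iio] at hr hs
      rcases le_total r s with h' | h'
      · exact haux r s h' hs h
      · exact (haux s r h' hr h.symm).symm
    calc n = ((Finset.range n).image (α ^ ·)).card := himg.symm
      _ ≤ _ := Finset.card_le_card hroots
  have hcard2 : ((c.map φ).roots.toFinset).card ≤ Multiset.card (c.map φ).roots :=
    Multiset.toFinset_card_le _
  have hcard3 : Multiset.card (c.map φ).roots ≤ (c.map φ).natDegree :=
    Polynomial.card_roots' _
  have hcard4 : (c.map φ).natDegree ≤ c.natDegree := Polynomial.natDegree_map_le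
  omega
end

section
/- Let F be a finite field and E an extension field of F, let n be a positive integer with gcd(n, 3) = 1, and let α ∈ E have multiplicative order exactly n. If c ∈ F[X] is nonzero with deg c < n and c(α^i) = 0 for all i ∈ {−4, −2, −1, 1, 2, 4} (negative exponents interpreted through the order of α), then the Hamming weight of c is at least 5. -/
open Polynomial

lemma prod_dvd_of_roots {E : Type*} [Field E] {p : E[X]} (hp : p ≠ 0) {k : ℕ}
    (x : Fin k → E) (hinj : Function.Injective x) (hroot : ∀ j, p.eval (x j) = 0) :
    (∏ j, (X - C (x j))) ∣ p := by
  classical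
  have hs : (Finset.univ.val.map x : Multiset E) ≤ p.roots := by
    refine Multiset.le_iff_count.2 fun a => ?_
    have hnd : (Finset.univ.val.map x).Nodup := Finset.univ.nodup.map hinj
    by_cases ha : a ∈ (Finset.univ.val.map x : Multiset E)
    · have h1 : (Finset.univ.val.map x).count a ≤ 1 :=
        (Multiset.nodup_iff_count_le_one.1 hnd) a
      have h2 : 1 ≤ p.roots.count a := by
        rw [Multiset.one_le_count_iff_mem, Polynomial.mem_roots hp]
        obtain ⟨j, _, rfl⟩ := Multiset.mem_map.1 ha
        exact hroot j
      omega
    · exact le_trans (le_of_eq (Multiset.count_eq_zero_of_notMem ha)) (Nat.zero_le _)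
  have h := (Multiset.prod_X_sub_C_dvd_iff_le_roots hp (Finset.univ.val.map x)).2 hs
  rw [Finset.prod_eq_multiset_prod]
  simpa [Multiset.map_map, Function.comp_def] using h

lemma coeff_mul_linear {E : Type*} [Field E] (m : E[X]) (a b : E) (k : ℕ) :
    (m * (C a * X + C b)).coeff (k+1) = a * m.coeff k + b * m.coeff (k+1) := by
  rw [mul_add, coeff_add, show m * (C a * X) = m * X * C a by ring, coeff_mul_C, coeff_mul_X,
    coeff_mul_C]
  ring

lemma core4 {E : Type*} [Field E] (x : Fin 4 → E) (hinj : Function.Injective x)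
    (hx0 : ∀ j, x j ≠ 0) (hcube : ∀ i j, x i ^ 3 = x j ^ 3 → i = j)
    (w : Fin 4 → E) (hw : w ≠ 0)
    (heq : ∀ k ∈ ({0,2,3,5,6,8} : Finset ℕ), ∑ j, w j * x j ^ k = 0) : False := by
  classical
  set m : E[X] := ∏ j, (X - C (x j)) with hm
  have hmmonic : m.Monic := monic_prod_of_monic _ _ fun _ _ => monic_X_sub_C _
  have hmne : m ≠ 0 := hmmonic.ne_zero
  have hmdeg : m.natDegree = 4 := by
    rw [hm, natDegree_prod _ _ fun j _ => X_sub_C_ne_zero (x j)]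
    simp
  -- dependence extraction
  have dep : ∀ (k : Fin 4 → ℕ), (∀ a, k a ∈ ({0,2,3,5,6,8} : Finset ℕ)) →
      ∃ v : Fin 4 → E, v ≠ 0 ∧ ∀ b, ∑ a, v a * x b ^ k a = 0 := by
    intro k hk
    set M : Matrix (Fin 4) (Fin 4) E := Matrix.of (fun a b => x b ^ k a) with hM
    have hdet : M.det = 0 := by
      rw [← Matrix.exists_mulVec_eq_zero_iff]
      refine ⟨w, hw, funext fun a => ?_⟩
      simpa [M, Matrix.mulVec, dotProduct, mul_comm] using heq (k a) (hk a)
    obtain ⟨v, hv0, hv⟩ := Matrix.exists_vecMul_eq_zero_iff.2 hdet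
    refine ⟨v, hv0, fun b => ?_⟩
    simpa [M, Matrix.vecMul, dotProduct] using congrFun hv b
  -- D2 : m.coeff 2 = 0
  have hm2 : m.coeff 2 = 0 := by
    obtain ⟨v, hv0, hv⟩ := dep ![2,3,5,6] (by decide)
    set p : E[X] := C (v 0) + C (v 1) * X + C (v 2) * X ^ 3 + C (v 3) * X ^ 4 with hp
    have hpne : p ≠ 0 := by
      intro h
      apply hv0
      have c0 : v 0 = 0 := by have := congrArg (fun q => Polynomial.coeff q 0) h; simpa [hp] using this
      have c1 : v 1 = 0 := by have := congrArg (fun q => Polynomial.coeff q 1) h; simpa [hp] using this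
      have c2 : v 2 = 0 := by have := congrArg (fun q => Polynomial.coeff q 3) h; simpa [hp] using this
      have c3 : v 3 = 0 := by have := congrArg (fun q => Polynomial.coeff q 4) h; simpa [hp] using this
      funext a; fin_cases a <;> assumption
    have hroot : ∀ b, p.eval (x b) = 0 := by
      intro b
      have h := hv b
      rw [Fin.sum_univ_four] at h
      simp only [Matrix.cons_val_zero, Matrix.cons_val_one, Matrix.head_cons,
        Matrix.cons_val_two, Matrix.tail_cons, Matrix.cons_val_three] at h
      have h2 : (v 0 + v 1 * x b + v 2 * x b ^ 3 + v 3 * x b ^ 4) * x b ^ 2 = 0 := by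
        linear_combination h
      rcases mul_eq_zero.1 h2 with h3 | h3
      · simp [hp, h3]
      · exact absurd (pow_eq_zero_iff (by norm_num)|>.1 h3) (hx0 b)
    obtain ⟨q, hq⟩ := prod_dvd_of_roots hpne x hinj hroot
    have hqne : q ≠ 0 := by rintro rfl; simp [hq] at hpne
    have hpd : p.natDegree ≤ 4 := by rw [hp]; compute_degree
    have hq0 : q.natDegree = 0 := by
      have := natDegree_mul hmne hqne
      rw [← hq, hmdeg] at this
      omega
    obtain ⟨d, rfl⟩ := Polynomial.natDegree_eq_zero.1 hq0
    have hdne : d ≠ 0 := by rintro rfl; simp at hqne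
    have hc2 : p.coeff 2 = 0 := by simp [hp, coeff_X_pow]
    rw [hq, coeff_mul_C] at hc2
    exact (mul_eq_zero.1 hc2).resolve_right hdne
  -- D1 : m.coeff 0 = m.coeff 1 * m.coeff 3
  have hm0 : m.coeff 0 = m.coeff 1 * m.coeff 3 := by
    obtain ⟨v, hv0, hv⟩ := dep ![0,2,3,5] (by decide)
    set p : E[X] := C (v 0) + C (v 1) * X ^ 2 + C (v 2) * X ^ 3 + C (v 3) * X ^ 5 with hp
    have hpne : p ≠ 0 := by
      intro h
      apply hv0
      have c0 : v 0 = 0 := by have := congrArg (fun q => Polynomial.coeff q 0) h; simpa [hp] using this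
      have c1 : v 1 = 0 := by have := congrArg (fun q => Polynomial.coeff q 2) h; simpa [hp, coeff_X_pow] using this
      have c2 : v 2 = 0 := by have := congrArg (fun q => Polynomial.coeff q 3) h; simpa [hp, coeff_X_pow] using this
      have c3 : v 3 = 0 := by have := congrArg (fun q => Polynomial.coeff q 5) h; simpa [hp, coeff_X_pow] using this
      funext a; fin_cases a <;> assumption
    have hroot : ∀ b, p.eval (x b) = 0 := by
      intro b
      have h := hv b
      rw [Fin.sum_univ_four] at h
      simp only [Matrix.cons_val_zero, Matrix.cons_val_one, Matrix.head_cons,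
        Matrix.cons_val_two, Matrix.tail_cons, Matrix.cons_val_three] at h
      simp [hp]
      linear_combination h
    obtain ⟨q, hq⟩ := prod_dvd_of_roots hpne x hinj hroot
    have hqne : q ≠ 0 := by rintro rfl; simp [hq] at hpne
    have hpd : p.natDegree ≤ 5 := by rw [hp]; compute_degree
    have hq1 : q.natDegree ≤ 1 := by
      have := natDegree_mul hmne hqne
      rw [← hq, hmdeg] at this
      omega
    have hqeq := Polynomial.eq_X_add_C_of_natDegree_le_one hq1
    rw [← hm] at hq
    set a := q.coeff 1 with ha
    set b := q.coeff 0 with hb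
    have hm4 : m.coeff 4 = 1 := by
      have := hmmonic.coeff_natDegree
      rwa [hmdeg] at this
    have e1 : a * m.coeff 0 + b * m.coeff 1 = 0 := by
      have hc1 : p.coeff 1 = 0 := by simp [hp, coeff_X_pow]
      rw [hq, hqeq] at hc1
      rw [← hc1]
      exact (coeff_mul_linear m a b 0).symm
    have e4 : a * m.coeff 3 + b = 0 := by
      have hc4 : p.coeff 4 = 0 := by simp [hp, coeff_X_pow]
      rw [hq, hqeq] at hc4
      have := coeff_mul_linear m a b 3
      rw [hc4, hm4, mul_one] at this
      exact this.symm
    have hane : a ≠ 0 := by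
      intro ha0
      rw [ha0, zero_mul, zero_add] at e4
      rw [hqeq, ha0, e4] at hqne
      simp at hqne
    have h5 : a * (m.coeff 0 - m.coeff 1 * m.coeff 3) = 0 := by
      linear_combination e1 - m.coeff 1 * e4
    have h6 := (mul_eq_zero.1 h5).resolve_left hane
    linear_combination h6
  -- factorization m = (X^3 + C m1) * (X + C m3)
  set m1 := m.coeff 1 with hm1d
  set m3 := m.coeff 3 with hm3d
  have hm4 : m.coeff 4 = 1 := by
    have := hmmonic.coeff_natDegree
    rwa [hmdeg] at this
  have hfact : m = (X ^ 3 + C m1) * (X + C m3) := by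
    have hR : ((X ^ 3 + C m1) * (X + C m3) : E[X]) =
        X ^ 4 + C m3 * X ^ 3 + C m1 * X + C (m1 * m3) := by
      rw [C_mul]; ring
    rw [hR]
    ext i
    match i with
    | 0 => simpa [coeff_X_pow] using hm0
    | 1 => simp [coeff_X_pow, hm1d]
    | 2 => simpa [coeff_X_pow] using hm2
    | 3 => simp [coeff_X_pow, hm3d]
    | 4 => simpa [coeff_X_pow] using hm4
    | (j+5) =>
      rw [coeff_eq_zero_of_natDegree_lt (by omega : m.natDegree < j + 5)]
      rw [coeff_eq_zero_of_natDegree_lt]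
      refine lt_of_le_of_lt ?_ (by omega : 4 < j + 5)
      compute_degree
  have hroots : ∀ j, (x j ^ 3 + m1) * (x j + m3) = 0 := by
    intro j
    have hmj : m.eval (x j) = 0 := by
      rw [hm, eval_prod]
      exact Finset.prod_eq_zero (Finset.mem_univ j) (by simp)
    rw [hfact] at hmj
    simpa using hmj
  have key : ∀ j, x j ^ 3 = -m1 ∨ x j = -m3 := by
    intro j
    rcases mul_eq_zero.1 (hroots j) with h | h
    · exact Or.inl (eq_neg_of_add_eq_zero_left h)
    · exact Or.inr (eq_neg_of_add_eq_zero_left h)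
  classical
  set S := Finset.univ.filter (fun j => x j ^ 3 = -m1) with hS
  have hSc : (Finset.univ.filter (fun j => ¬ x j ^ 3 = -m1)).card ≤ 1 := by
    refine Finset.card_le_one.2 fun i hi j hj => ?_
    simp only [Finset.mem_filter] at hi hj
    have hxi : x i = -m3 := (key i).resolve_left hi.2
    have hxj : x j = -m3 := (key j).resolve_left hj.2
    exact hinj (hxi.trans hxj.symm)
  have hcard : S.card + (Finset.univ.filter (fun j => ¬ x j ^ 3 = -m1)).card = 4 := by
    rw [hS, Finset.card_filter_add_card_filter_not]
    simp
  have h2 : 1 < S.card := by omega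
  obtain ⟨i, hi, j, hj, hij⟩ := Finset.one_lt_card.1 h2
  simp only [hS, Finset.mem_filter] at hi hj
  exact hij (hcube i j (hi.2.trans hj.2.symm))

/-- First class of reversible q-ary cyclic codes (Table I): if `gcd(n, 3) = 1`
and the codeword `c` vanishes at `α^i` for `i ∈ {−4, −2, −1, 1, 2, 4}`, then
`wt(c) ≥ 5`. -/
theorem reversible_class_one
    (F E : Type*) [Field F] [Fintype F] [Field E] [Algebra F E]
    (n : ℕ) (hn : 0 < n) (hn3 : Nat.gcd n 3 = 1)
    (α : E) (hα : orderOf α = n)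
    (c : Polynomial F) (hc : c ≠ 0) (hcdeg : c.natDegree < n)
    (hzero : ∀ i ∈ ({-4, -2, -1, 1, 2, 4} : Finset ℤ),
      (c.map (algebraMap F E)).eval (α ^ i) = 0) :
    5 ≤ c.support.card := by
  classical
  by_contra hlt
  push_neg at hlt
  have hle4 : c.support.card ≤ 4 := by omega
  set φ := algebraMap F E with hφd
  have hφ : Function.Injective φ := (algebraMap F E).injective
  have hαn : α ^ n = 1 := by rw [← hα]; exact pow_orderOf_eq_one α
  have hα0 : α ≠ 0 := by
    intro h
    rw [h, zero_pow hn.ne'] at hαn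
    exact zero_ne_one hαn
  -- evaluation as sum over support
  have heval : ∀ i : ℤ, i ∈ ({-4, -2, -1, 1, 2, 4} : Finset ℤ) →
      ∑ e ∈ c.support, φ (c.coeff e) * (α ^ i) ^ e = 0 := by
    intro i hi
    have h := hzero i hi
    rwa [Polynomial.eval_map, Polynomial.eval₂_eq_sum, Polynomial.sum_def] at h
  rcases lt_or_ge n 4 with hn4 | hn4
  · -- small n : n = 1, 2 (3 excluded by gcd)
    interval_cases n
    · -- n = 1
      have hα1 : α = 1 := orderOf_eq_one_iff.1 hα
      have hd : c.natDegree = 0 := by omega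
      obtain ⟨a, rfl⟩ := Polynomial.natDegree_eq_zero.1 hd
      have h1 := hzero 1 (by decide)
      rw [hα1] at h1
      simp at h1
      exact hc (by rw [h1]; simp)
    · -- n = 2
      have hα1 : α ≠ 1 := by
        intro h
        rw [h, orderOf_one] at hα
        omega
      have hd : c.natDegree ≤ 1 := by omega
      have hceq := Polynomial.eq_X_add_C_of_natDegree_le_one hd
      set a := c.coeff 1 with hha
      set b := c.coeff 0 with hhb
      have h1 := hzero 1 (by decide)
      have h2 := hzero 2 (by decide)
      rw [zpow_one, hceq] at h1
      have hα2 : α ^ (2:ℤ) = 1 := by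
        rw [show (2:ℤ) = ((2:ℕ):ℤ) by norm_num, zpow_natCast, hαn]
      rw [hα2, hceq] at h2
      simp [Polynomial.eval_map] at h1 h2
      -- h1 : φ a * α + φ b = 0, h2 : φ a + φ b = 0
      have hsub : φ a * (α - 1) = 0 := by linear_combination h1 - h2
      have haz : φ a = 0 := (mul_eq_zero.1 hsub).resolve_right (sub_ne_zero.2 hα1)
      have hbz : φ b = 0 := by rw [haz] at h2; linear_combination h2
      have ha0 : a = 0 := by
        apply hφ; rw [haz]; simp
      have hb0 : b = 0 := by
        apply hφ; rw [hbz]; simp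
      exact hc (by rw [hceq, ha0, hb0]; simp)
    · -- n = 3 impossible
      simp at hn3
  · -- main case n ≥ 4
    have hsupsub : c.support ⊆ Finset.range n := by
      intro e he
      rw [Finset.mem_range]
      exact lt_of_le_of_lt (Polynomial.le_natDegree_of_mem_supp e he) hcdeg
    obtain ⟨t, hst, htr, htc⟩ := Finset.exists_subsuperset_card_eq hsupsub hle4
      (by simpa using hn4)
    set ε : Fin 4 → ℕ := fun j => ((t.orderIsoOfFin htc j : t) : ℕ) with hε
    have hεmem : ∀ j, ε j ∈ t := fun j => (t.orderIsoOfFin htc j).2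
    have hεlt : ∀ j, ε j < n := fun j => Finset.mem_range.1 (htr (hεmem j))
    have hεinj : Function.Injective ε := fun a b h =>
      (t.orderIsoOfFin htc).injective (Subtype.ext h)
    have hεsurj : ∀ e ∈ t, ∃ j, ε j = e := by
      intro e he
      obtain ⟨j, hj⟩ := (t.orderIsoOfFin htc).surjective ⟨e, he⟩
      exact ⟨j, by rw [hε]; simp [hj]⟩
    have hmodeq : ∀ u v : ℕ, α ^ u = α ^ v → u % n = v % n := by
      have key : ∀ u v : ℕ, u ≤ v → α ^ u = α ^ v → u % n = v % n := by
        intro u v huv h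
        have h1 : α ^ u * α ^ (v - u) = α ^ u * 1 := by
          rw [mul_one, ← pow_add, h]
          congr 1
          omega
        have h2 : α ^ (v - u) = 1 := mul_left_cancel₀ (pow_ne_zero u hα0) h1
        have h3 : n ∣ v - u := hα ▸ orderOf_dvd_of_pow_eq_one h2
        obtain ⟨k, hk⟩ := h3
        have hv : v = u + n * k := by omega
        rw [hv, Nat.add_mul_mod_self_left]
      intro u v h
      rcases le_total u v with huv | huv
      · exact key u v huv h
      · exact (key v u huv h.symm).symm
    have hpowinj : ∀ a b : ℕ, a < n → b < n → α ^ a = α ^ b → a = b := by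
      intro a b haa hbb h
      have := hmodeq a b h
      rwa [Nat.mod_eq_of_lt haa, Nat.mod_eq_of_lt hbb] at this
    set x : Fin 4 → E := fun j => α ^ ε j with hx
    have hx0 : ∀ j, x j ≠ 0 := fun j => pow_ne_zero _ hα0
    have hinj : Function.Injective x := fun a b h =>
      hεinj (hpowinj _ _ (hεlt a) (hεlt b) h)
    have hcube : ∀ i j, x i ^ 3 = x j ^ 3 → i = j := by
      intro i j h
      rw [hx] at h
      simp only [← pow_mul] at h
      have hmod : (ε i * 3) % n = (ε j * 3) % n := hmodeq _ _ h
      rw [mul_comm (ε i) 3, mul_comm (ε j) 3] at hmod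
      have := Nat.ModEq.cancel_left_of_coprime (by simpa using hn3) hmod
      apply hεinj
      rwa [Nat.ModEq, Nat.mod_eq_of_lt (hεlt i), Nat.mod_eq_of_lt (hεlt j)] at this
    set w : Fin 4 → E := fun j =>
      if ε j ∈ c.support then φ (c.coeff (ε j)) * ((α ^ ε j)⁻¹) ^ 4 else 0 with hwd
    have hw : w ≠ 0 := by
      obtain ⟨e, he⟩ := Finset.nonempty_of_ne_empty (by simpa using hc :
        c.support ≠ ∅)
      obtain ⟨j, hj⟩ := hεsurj e (hst he)
      intro h0
      have := congrFun h0 j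
      rw [hwd] at this
      simp only [hj, he, if_true] at this
      have h1 : φ (c.coeff e) ≠ 0 := fun hz =>
        (Polynomial.mem_support_iff.1 he) (hφ (by rw [hz, map_zero]))
      have h2 : ((α ^ e)⁻¹ : E) ^ 4 ≠ 0 :=
        pow_ne_zero _ (inv_ne_zero (pow_ne_zero _ hα0))
      exact (mul_ne_zero h1 h2) this
    have heqk : ∀ k ∈ ({0,2,3,5,6,8} : Finset ℕ), ∑ j, w j * x j ^ k = 0 := by
      intro k hk
      have hik : ((k:ℤ) - 4) ∈ ({-4, -2, -1, 1, 2, 4} : Finset ℤ) := by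
        fin_cases hk <;> decide
      have h0 := heval ((k:ℤ) - 4) hik
      -- pointwise identity
      have hpt : ∀ e : ℕ, ((α ^ ((k:ℤ) - 4)) ^ e : E) = ((α ^ e)⁻¹) ^ 4 * (α ^ e) ^ k := by
        intro e
        have hβ : (α : E) ^ e ≠ 0 := pow_ne_zero _ hα0
        rw [zpow_sub₀ hα0, show ((4:ℤ) = ((4:ℕ):ℤ)) by norm_num, zpow_natCast, zpow_natCast,
          div_pow, ← pow_mul, ← pow_mul, mul_comm k e, mul_comm 4 e, pow_mul, pow_mul]
        field_simp
      -- sum over Fin 4 = sum over t = sum over support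
      have hsum : ∑ j, w j * x j ^ k =
          ∑ e ∈ t, (if e ∈ c.support then φ (c.coeff e) * ((α ^ e)⁻¹) ^ 4 else 0) * (α ^ e) ^ k := by
        rw [← Finset.sum_coe_sort t]
        exact Fintype.sum_equiv (t.orderIsoOfFin htc).toEquiv _ _ fun j => rfl
      rw [hsum, ← Finset.sum_subset hst (by intro e _ he; simp [he])]
      rw [← h0]
      apply Finset.sum_congr rfl
      intro e he
      rw [if_pos he, hpt e]
      ring
    exact core4 x hinj hx0 hcube w hw heqk
end

section
/- Let F = 𝔽₂ be the field with two elements and E an extension field of F, let n be a positive integer with gcd(n, 3) = 1, and let α ∈ E have multiplicative order exactly n. If c ∈ 𝔽₂[X] is nonzero with deg c < n and c(α^i) = 0 for all i ∈ {−7, −5, −1, 1, 5, 7} (negative exponents interpreted through the order of α), then the Hamming weight of c is at least 11. -/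
open Polynomial

/-- Third class of binary reversible cyclic codes (Table I): if
`gcd(n, 3) = 1` and the binary codeword `c` vanishes at `α^i` for
`i ∈ {−7, −5, −1, 1, 5, 7}`, then `wt(c) ≥ 11`. -/
theorem binary_reversible_class_three
    (E : Type*) [Field E] [Algebra (ZMod 2) E]
    (n : ℕ) (hn : 0 < n) (hn3 : Nat.gcd n 3 = 1)
    (α : E) (hα : orderOf α = n)
    (c : Polynomial (ZMod 2)) (hc : c ≠ 0) (hcdeg : c.natDegree < n)
    (hzero : ∀ i ∈ ({-7, -5, -1, 1, 5, 7} : Finset ℤ),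
      (c.map (algebraMap (ZMod 2) E)).eval (α ^ i) = 0) :
    11 ≤ c.support.card := by
  by_contra hcard
  have hw : c.support.card ≤ 10 := by omega
  have hsupp : c.support.Nonempty := Polynomial.support_nonempty.mpr hc
  set φ := algebraMap (ZMod 2) E with hφ
  have hφinj : Function.Injective φ := φ.injective
  haveI hE2 : CharP E 2 := charP_of_injective_ringHom hφinj 2
  haveI : ExpChar E 2 := ExpChar.prime Nat.prime_two
  have hαn : α ^ n = 1 := hα ▸ pow_orderOf_eq_one α
  have hα0 : α ≠ 0 := by
    intro h; rw [h, zero_pow hn.ne'] at hαn; exact zero_ne_one hαn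
  -- evaluation formula
  have heval : ∀ x : E, (c.map φ).eval x = ∑ a ∈ c.support, x ^ a := by
    intro x
    rw [eval_map, eval₂_eq_sum, Polynomial.sum_def]
    refine Finset.sum_congr rfl fun a ha => ?_
    have h1 : c.coeff a = 1 := by
      have h0 := Polynomial.mem_support_iff.mp ha
      have : ∀ z : ZMod 2, z ≠ 0 → z = 1 := by decide
      exact this _ h0
    rw [h1, map_one, one_mul]
  have hz : ∀ i : ℤ, i ∈ ({-7, -5, -1, 1, 5, 7} : Finset ℤ) →
      ∑ a ∈ c.support, (α ^ i) ^ a = 0 := by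
    intro i hi
    rw [← heval]; exact hzero i hi
  have hdouble : ∀ i : ℤ, (∑ a ∈ c.support, (α ^ i) ^ a = 0) →
      ∑ a ∈ c.support, (α ^ (2 * i)) ^ a = 0 := by
    intro i h
    have h2 : ∀ a : ℕ, (α ^ (2 * i)) ^ a = ((α ^ i) ^ a) ^ 2 := by
      intro a
      rw [mul_comm (2 : ℤ) i, zpow_mul, show ((2:ℤ)) = ((2:ℕ) : ℤ) by norm_num,
        zpow_natCast, pow_right_comm]
    calc ∑ a ∈ c.support, (α ^ (2 * i)) ^ a
        = ∑ a ∈ c.support, ((α ^ i) ^ a) ^ 2 :=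
          Finset.sum_congr rfl fun a _ => h2 a
      _ = (∑ a ∈ c.support, (α ^ i) ^ a) ^ 2 := (sum_pow_char 2 _ _).symm
      _ = 0 := by rw [h]; ring
  have e1 : ∑ a ∈ c.support, (α ^ (1:ℤ)) ^ a = 0 := hz 1 (by decide)
  have e5 : ∑ a ∈ c.support, (α ^ (5:ℤ)) ^ a = 0 := hz 5 (by decide)
  have e7 : ∑ a ∈ c.support, (α ^ (7:ℤ)) ^ a = 0 := hz 7 (by decide)
  have em1 : ∑ a ∈ c.support, (α ^ (-1:ℤ)) ^ a = 0 := hz (-1) (by decide)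
  have em5 : ∑ a ∈ c.support, (α ^ (-5:ℤ)) ^ a = 0 := hz (-5) (by decide)
  have em7 : ∑ a ∈ c.support, (α ^ (-7:ℤ)) ^ a = 0 := hz (-7) (by decide)
  have e2 : ∑ a ∈ c.support, (α ^ (2:ℤ)) ^ a = 0 := by
    have := hdouble 1 e1; rw [show (2 * 1 : ℤ) = 2 by norm_num] at this; exact this
  have e4 : ∑ a ∈ c.support, (α ^ (4:ℤ)) ^ a = 0 := by
    have := hdouble 2 e2; rw [show (2 * 2 : ℤ) = 4 by norm_num] at this; exact this
  have e8 : ∑ a ∈ c.support, (α ^ (8:ℤ)) ^ a = 0 := by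
    have := hdouble 4 e4; rw [show (2 * 4 : ℤ) = 8 by norm_num] at this; exact this
  have e10 : ∑ a ∈ c.support, (α ^ (10:ℤ)) ^ a = 0 := by
    have := hdouble 5 e5; rw [show (2 * 5 : ℤ) = 10 by norm_num] at this; exact this
  have em2 : ∑ a ∈ c.support, (α ^ (-2:ℤ)) ^ a = 0 := by
    have := hdouble (-1) em1; rw [show (2 * (-1) : ℤ) = -2 by norm_num] at this; exact this
  have em4 : ∑ a ∈ c.support, (α ^ (-4:ℤ)) ^ a = 0 := by
    have := hdouble (-2) em2; rw [show (2 * (-2) : ℤ) = -4 by norm_num] at this; exact this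
  have em8 : ∑ a ∈ c.support, (α ^ (-8:ℤ)) ^ a = 0 := by
    have := hdouble (-4) em4; rw [show (2 * (-4) : ℤ) = -8 by norm_num] at this; exact this
  have em10 : ∑ a ∈ c.support, (α ^ (-10:ℤ)) ^ a = 0 := by
    have := hdouble (-5) em5; rw [show (2 * (-5) : ℤ) = -10 by norm_num] at this; exact this
  -- move to the algebraic closure
  set K := AlgebraicClosure E with hKdef
  set ι := algebraMap E K with hιdef
  have hιinj : Function.Injective ι := ι.injective
  haveI hK2 : CharP K 2 := charP_of_injective_ringHom hιinj 2
  set x := ι α with hxdef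
  have hx0 : x ≠ 0 := by
    intro h
    exact hα0 (hιinj (by rw [← hxdef, h, map_zero]))
  have hxn : x ^ n = 1 := by rw [hxdef, ← map_pow, hαn, map_one]
  have h2K : (1:K) + 1 = 0 := by
    have h := CharP.cast_eq_zero K 2
    push_cast at h; linear_combination h
  obtain ⟨ω, hωroot⟩ := IsAlgClosed.exists_root (p := (X ^ 2 + X + 1 : K[X])) (by
    have h : (X ^ 2 + X + 1 : K[X]).degree = 2 := by compute_degree!
    rw [h]; decide)
  have hω : ω ^ 2 + ω + 1 = 0 := by simpa [IsRoot] using hωroot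
  have hω0 : ω ≠ 0 := by rintro rfl; simp at hω
  have hω1 : ω ≠ 1 := by
    rintro rfl
    rw [one_pow, h2K, zero_add] at hω
    exact one_ne_zero hω
  have hω3 : ω ^ 3 = 1 := by linear_combination (ω - 1) * hω
  have push : ∀ i : ℤ, (∑ a ∈ c.support, (α ^ i) ^ a = 0) →
      ∑ a ∈ c.support, (x ^ i) ^ a = 0 := by
    intro i h
    have h2 := congrArg ι h
    rw [map_sum, map_zero] at h2
    simpa only [map_pow, map_zpow₀, ← hxdef] using h2
  have hK14 : ∀ i : ℤ,
      i ∈ ({-10, -8, -7, -5, -4, -2, -1, 1, 2, 4, 5, 7, 8, 10} : Finset ℤ) →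
      ∑ a ∈ c.support, (x ^ i) ^ a = 0 := by
    intro i hi
    fin_cases hi
    · exact push _ em10
    · exact push _ em8
    · exact push _ em7
    · exact push _ em5
    · exact push _ em4
    · exact push _ em2
    · exact push _ em1
    · exact push _ e1
    · exact push _ e2
    · exact push _ e4
    · exact push _ e5
    · exact push _ e7
    · exact push _ e8
    · exact push _ e10
  -- the doubled configuration
  set s : Finset (ℕ × Bool) := c.support ×ˢ (Finset.univ : Finset Bool) with hsdef
  set γ : ℕ × Bool → K := fun j => (if j.2 then ω else ω ^ 2) * x ^ j.1 with hγdef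
  have hγ0 : ∀ j : ℕ × Bool, γ j ≠ 0 := by
    intro j
    have h1 : (if j.2 then ω else ω ^ 2) ≠ 0 := by
      cases hj : j.2 <;> simp [hω0]
    exact mul_ne_zero h1 (pow_ne_zero _ hx0)
  have hcomm : ∀ (i : ℤ) (a : ℕ), ((x ^ a : K)) ^ i = (x ^ i) ^ a := by
    intro i a
    rw [← zpow_natCast x a, ← zpow_mul, mul_comm, zpow_mul, zpow_natCast]
  have hω3z : ω ^ (3:ℤ) = 1 := by
    rw [show (3:ℤ) = ((3:ℕ) : ℤ) by norm_num, zpow_natCast, hω3]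
  have hω23 : (ω ^ 2) ^ (3:ℤ) = 1 := by
    rw [show (3:ℤ) = ((3:ℕ) : ℤ) by norm_num, zpow_natCast, ← pow_mul,
      show 2 * 3 = 3 * 2 by ring, pow_mul, hω3, one_pow]
  have L1 : ∀ i : ℤ, (3:ℤ) ∣ i → ω ^ i + (ω ^ 2) ^ i = 0 := by
    rintro i ⟨k, rfl⟩
    rw [zpow_mul, zpow_mul, hω3z, hω23, one_zpow]
    exact h2K
  have hq : ∀ i ∈ Finset.Icc (-10 : ℤ) 10, ∑ j ∈ s, γ j ^ i = 0 := by
    intro i hi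
    have expand : ∑ j ∈ s, γ j ^ i
        = (ω ^ i + (ω ^ 2) ^ i) * ∑ a ∈ c.support, (x ^ i) ^ a := by
      rw [hsdef, Finset.sum_product, Finset.mul_sum]
      refine Finset.sum_congr rfl fun a ha => ?_
      rw [Fintype.sum_bool]
      have g1 : γ (a, true) = ω * x ^ a := by simp [hγdef]
      have g2 : γ (a, false) = ω ^ 2 * x ^ a := by simp [hγdef]
      rw [g1, g2, mul_zpow, mul_zpow, hcomm, add_mul]
    rw [expand]
    have hall : ∀ i : ℤ, (i % 3 = 0 ∨
        i ∈ ({-10, -8, -7, -5, -4, -2, -1, 1, 2, 4, 5, 7, 8, 10} : Finset ℤ)) →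
        (ω ^ i + (ω ^ 2) ^ i) * (∑ a ∈ c.support, (x ^ i) ^ a) = 0 := by
      rintro i (hmod | hmem)
      · exact mul_eq_zero_of_left (L1 _ (Int.dvd_of_emod_eq_zero hmod)) _
      · exact mul_eq_zero_of_right _ (hK14 _ hmem)
    rw [Finset.mem_Icc] at hi
    obtain ⟨hi1, hi2⟩ := hi
    interval_cases i <;> exact hall _ (by decide)
  -- distinctness
  have haux : ∀ a b : ℕ, a ≤ b → b < n → α ^ a = α ^ b → a = b := by
    intro a b hab hbn h1
    have hd : α ^ (b - a) = 1 := by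
      have h2 : α ^ a * α ^ (b - a) = α ^ a * 1 := by
        rw [mul_one, ← pow_add, Nat.add_sub_cancel' hab]; exact h1.symm
      exact mul_left_cancel₀ (pow_ne_zero _ hα0) h2
    have h3 : n ∣ b - a := hα ▸ orderOf_dvd_of_pow_eq_one hd
    have h4 : b - a = 0 := Nat.eq_zero_of_dvd_of_lt h3 (by omega)
    omega
  have hxinj : ∀ a ∈ c.support, ∀ b ∈ c.support, (x ^ a : K) = x ^ b → a = b := by
    intro a ha b hb hab
    rw [hxdef, ← map_pow, ← map_pow] at hab
    have h1 : α ^ a = α ^ b := hιinj hab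
    have ha' : a < n := lt_of_le_of_lt (Polynomial.le_natDegree_of_mem_supp a ha) hcdeg
    have hb' : b < n := lt_of_le_of_lt (Polynomial.le_natDegree_of_mem_supp b hb) hcdeg
    rcases le_total a b with h | h
    · exact haux a b h hb' h1
    · exact (haux b a h ha' h1.symm).symm
  have hroot1 : ∀ u : K, u ^ n = 1 → u ^ 3 = 1 → u = 1 := by
    intro u hun hu3
    have d1 : orderOf u ∣ n := orderOf_dvd_of_pow_eq_one hun
    have d2 : orderOf u ∣ 3 := orderOf_dvd_of_pow_eq_one hu3
    have d3 : orderOf u ∣ 1 := hn3 ▸ Nat.dvd_gcd d1 d2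
    exact orderOf_eq_one_iff.mp (Nat.dvd_one.mp d3)
  have hxbn : ∀ b : ℕ, ((x ^ b : K)) ^ n = 1 := by
    intro b; rw [← pow_mul, mul_comm, pow_mul, hxn, one_pow]
  have hkey : ∀ a b : ℕ, ω * x ^ a ≠ x ^ b := by
    intro a b heq
    have hxa : (x ^ a : K) ≠ 0 := pow_ne_zero _ hx0
    have hωeq : ω = x ^ b * (x ^ a)⁻¹ := (eq_mul_inv_iff_mul_eq₀ hxa).mpr heq
    have hωn : ω ^ n = 1 := by
      rw [hωeq, mul_pow, inv_pow, hxbn, hxbn, inv_one, mul_one]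
    exact hω1 (hroot1 ω hωn hω3)
  have hdist : ∀ j ∈ s, ∀ j' ∈ s, γ j = γ j' → j = j' := by
    rintro ⟨a, e⟩ hj ⟨b, f⟩ hj' heq
    have ha : a ∈ c.support := (Finset.mem_product.mp hj).1
    have hb : b ∈ c.support := (Finset.mem_product.mp hj').1
    simp only [hγdef] at heq
    cases e <;> cases f <;> simp only [if_true, if_false, Bool.false_eq_true,
      Bool.true_eq_false, ite_true, ite_false] at heq
    · -- ω^2 * x^a = ω^2 * x^b
      have := hxinj a ha b hb (mul_left_cancel₀ (pow_ne_zero 2 hω0) heq)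
      rw [this]
    · -- ω^2 * x^a = ω * x^b  : cancel one ω
      exfalso
      have h1 : ω * (ω * x ^ a) = ω * x ^ b := by
        rw [← mul_assoc, ← pow_two]; exact heq
      exact hkey a b (mul_left_cancel₀ hω0 h1)
    · -- ω * x^a = ω^2 * x^b
      exfalso
      have h1 : ω * (x ^ a) = ω * (ω * x ^ b) := by
        rw [← mul_assoc, ← pow_two]; exact heq
      exact hkey b a (mul_left_cancel₀ hω0 h1).symm
    · have := hxinj a ha b hb (mul_left_cancel₀ hω0 heq)
      rw [this]
  -- final Vandermonde-style contradiction
  obtain ⟨a0, ha0⟩ := hsupp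
  have hj₀ : ((a0, true) : ℕ × Bool) ∈ s :=
    Finset.mem_product.mpr ⟨ha0, Finset.mem_univ _⟩
  have hm1 : 1 ≤ s.card := Finset.card_pos.mpr ⟨_, hj₀⟩
  have hm20 : s.card ≤ 20 := by
    rw [hsdef, Finset.card_product, Finset.card_univ, Fintype.card_bool]
    omega
  set G : Polynomial K := X ^ (21 - s.card) * ∏ j ∈ s.erase (a0, true), (X - C (γ j))
    with hGdef
  have hGdeg : G.natDegree ≤ 20 := by
    have h1 : (∏ j ∈ s.erase (a0, true), (X - C (γ j)) : K[X]).natDegree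
        ≤ s.card - 1 := by
      calc (∏ j ∈ s.erase (a0, true), (X - C (γ j)) : K[X]).natDegree
          ≤ ∑ j ∈ s.erase (a0, true), (X - C (γ j) : K[X]).natDegree :=
            Polynomial.natDegree_prod_le _ _
        _ = (s.erase (a0, true)).card := by simp [Polynomial.natDegree_X_sub_C]
        _ = s.card - 1 := by rw [Finset.card_erase_of_mem hj₀]
    calc G.natDegree ≤ (X ^ (21 - s.card) : K[X]).natDegree
          + (∏ j ∈ s.erase (a0, true), (X - C (γ j)) : K[X]).natDegree :=
          hGdef ▸ Polynomial.natDegree_mul_le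
      _ ≤ (21 - s.card) + (s.card - 1) := by
          gcongr
          exact le_of_eq (Polynomial.natDegree_X_pow _)
      _ ≤ 20 := by omega
  have key : ∀ j ∈ s, γ j ^ (-10 : ℤ) * G.eval (γ j)
      = ∑ k ∈ G.support, G.coeff k * γ j ^ ((k : ℤ) - 10) := by
    intro j hj
    rw [Polynomial.eval_eq_sum, Polynomial.sum_def, Finset.mul_sum]
    refine Finset.sum_congr rfl fun k hk => ?_
    rw [show ((k : ℤ) - 10) = -10 + (k : ℤ) by ring, zpow_add₀ (hγ0 j), zpow_natCast]
    ring
  have hT0 : ∑ j ∈ s, γ j ^ (-10 : ℤ) * G.eval (γ j) = 0 := by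
    rw [Finset.sum_congr rfl key, Finset.sum_comm]
    refine Finset.sum_eq_zero fun k hk => ?_
    have hk20 : (k : ℤ) - 10 ∈ Finset.Icc (-10 : ℤ) 10 := by
      have h1 : k ≤ G.natDegree := Polynomial.le_natDegree_of_mem_supp k hk
      rw [Finset.mem_Icc]
      omega
    rw [← Finset.mul_sum, hq _ hk20, mul_zero]
  have hT1 : ∑ j ∈ s, γ j ^ (-10 : ℤ) * G.eval (γ j)
      = γ (a0, true) ^ (-10 : ℤ) * G.eval (γ (a0, true)) := by
    refine Finset.sum_eq_single_of_mem _ hj₀ fun j hj hne => ?_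
    have hGj : G.eval (γ j) = 0 := by
      rw [hGdef]
      simp only [Polynomial.eval_mul, Polynomial.eval_pow, Polynomial.eval_X,
        Polynomial.eval_prod, Polynomial.eval_sub, Polynomial.eval_C]
      apply mul_eq_zero_of_right
      apply Finset.prod_eq_zero (Finset.mem_erase.mpr ⟨hne, hj⟩)
      simp
    rw [hGj, mul_zero]
  have hGne : G.eval (γ (a0, true)) ≠ 0 := by
    rw [hGdef]
    simp only [Polynomial.eval_mul, Polynomial.eval_pow, Polynomial.eval_X,
      Polynomial.eval_prod, Polynomial.eval_sub, Polynomial.eval_C]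
    apply mul_ne_zero (pow_ne_zero _ (hγ0 _))
    rw [Finset.prod_ne_zero_iff]
    intro j hj
    rw [sub_ne_zero]
    intro heq
    have hjs : j ∈ s := (Finset.mem_erase.mp hj).2
    have := hdist _ hj₀ _ hjs heq
    exact (Finset.mem_erase.mp hj).1 this.symm
  have : γ (a0, true) ^ (-10 : ℤ) * G.eval (γ (a0, true)) ≠ 0 :=
    mul_ne_zero (zpow_ne_zero _ (hγ0 _)) hGne
  exact this (hT1 ▸ hT0)
end
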